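/- arXiv:1203.6554 — 4 statements merged into one kernel-verified Lean document; each statement's English description precedes it below -/
import Mathlib

section
/- Let (S_n) be an upward skip-free (right-continuous) random walk on ℤ, i.e., the increment law μ is supported in {1, 0, −1, −2, −3, ...}. Then Kemperman's formula P[T_k = n] = ((k+1)/n) · P[S_n = k+1] holds for every integer k ≥ 0 and every n > k, where T_k = inf{n ≥ 1 : S_n > k}. -/
namespace KempAux

open scoped Classical

/-- Running maximum of `t` over `{0, ..., u}`. -/
def runMax (t : ℕ → ℤ) : ℕ → ℤ
  | 0 => t 0
  | u + 1 => max (runMax t u) (t (u + 1))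

lemma le_runMax (t : ℕ → ℤ) : ∀ {m u : ℕ}, m ≤ u → t m ≤ runMax t u := by
  intro m u
  induction u with
  | zero => intro h; interval_cases m; simp [runMax]
  | succ u ih =>
    intro h
    rcases Nat.lt_or_ge m (u + 1) with h' | h'
    · exact le_trans (ih (Nat.lt_succ_iff.mp h')) (le_max_left _ _)
    · have : m = u + 1 := le_antisymm h h'
      subst this; exact le_max_right _ _

lemma runMax_exists (t : ℕ → ℤ) (u : ℕ) : ∃ m, m ≤ u ∧ runMax t u = t m := by
  induction u with
  | zero => exact ⟨0, le_refl _, rfl⟩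
  | succ u ih =>
    obtain ⟨m, hm, he⟩ := ih
    rcases le_total (runMax t u) (t (u + 1)) with h | h
    · exact ⟨u + 1, le_refl _, max_eq_right h⟩
    · exact ⟨m, hm.trans (Nat.le_succ u), (max_eq_left h).trans he⟩

lemma runMax_le (t : ℕ → ℤ) {u : ℕ} {c : ℤ} (h : ∀ m, m ≤ u → t m ≤ c) :
    runMax t u ≤ c := by
  obtain ⟨m, hm, he⟩ := runMax_exists t u
  exact he ▸ h m hm

lemma count_steps (f : ℕ → ℤ) (hmono : ∀ u, f u ≤ f (u + 1)) (hstep : ∀ u, f (u + 1) ≤ f u + 1)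
    (a d : ℕ) :
    (((Finset.Ico a (a + d)).filter (fun v => f v < f (v + 1))).card : ℤ) = f (a + d) - f a := by
  induction d with
  | zero => simp
  | succ d ih =>
    have hins : Finset.Ico a (a + d + 1) = insert (a + d) (Finset.Ico a (a + d)) := by
      ext v; simp [Finset.mem_Ico]
    rw [show a + (d + 1) = a + d + 1 from rfl, hins, Finset.filter_insert]
    by_cases h : f (a + d) < f (a + d + 1)
    · rw [if_pos h, Finset.card_insert_of_notMem (by simp)]
      have h2 := hstep (a + d)
      push_cast
      omega
    · rw [if_neg h]
      have h1 := hmono (a + d)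
      have h3 : f (a + d + 1) = f (a + d) := le_antisymm (not_lt.mp h) h1
      omega

/-- sum over a shifted window -/
lemma sum_shift (y : ℕ → ℤ) (j m : ℕ) :
    ∑ p ∈ Finset.range m, y (j + p)
      = (∑ i ∈ Finset.range (j + m), y i) - ∑ i ∈ Finset.range j, y i := by
  induction m with
  | zero => simp
  | succ m ih => rw [Finset.sum_range_succ, ih, ← Nat.add_assoc, Finset.sum_range_succ]; ring

/-- periodic increments: the partial sums shift by the period sum -/
lemma tshift (n : ℕ) (y : ℕ → ℤ) (hper : ∀ m, y (m + n) = y m) (m : ℕ) :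
    ∑ i ∈ Finset.range (m + n), y i
      = (∑ i ∈ Finset.range m, y i) + ∑ i ∈ Finset.range n, y i := by
  induction m with
  | zero => simp
  | succ m ih =>
    have : m + 1 + n = (m + n) + 1 := by omega
    rw [this, Finset.sum_range_succ, ih, hper m, Finset.sum_range_succ]
    ring

/-- **Cycle lemma**: for a skip-free (steps ≤ 1) periodic sequence with period sum `k+1`,
exactly `k+1` of the `n` rotations stay `≤ k` before time `n`. -/
lemma cycle_count (n k : ℕ) (hn : 0 < n) (y : ℕ → ℤ)
    (hper : ∀ m, y (m + n) = y m) (hle : ∀ m, y m ≤ 1)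
    (hsum : ∑ i ∈ Finset.range n, y i = (k : ℤ) + 1) :
    ((Finset.range n).filter
        (fun j => ∀ m, 1 ≤ m → m < n →
          (∑ i ∈ Finset.range (j + m), y i) - ∑ i ∈ Finset.range j, y i ≤ (k : ℤ))).card
      = k + 1 := by
  set t : ℕ → ℤ := fun m => ∑ i ∈ Finset.range m, y i with ht
  have hts : ∀ m, t (m + 1) = t m + y m := by
    intro m; simp [ht, Finset.sum_range_succ]
  have hstep1 : ∀ m, t (m + 1) ≤ t m + 1 := by
    intro m; rw [hts]; linarith [hle m]
  have hshift : ∀ m, t (m + n) = t m + ((k : ℤ) + 1) := by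
    intro m
    have h := tshift n y hper m
    rw [hsum] at h
    exact h
  set R : ℕ → ℤ := runMax t with hR
  have hRdef : ∀ v, R (v + 1) = max (R v) (t (v + 1)) := fun v => rfl
  have hRmono : ∀ v, R v ≤ R (v + 1) := fun v => le_max_left _ _
  have htleR : ∀ {m v : ℕ}, m ≤ v → t m ≤ R v := fun h => le_runMax t h
  have hRstep : ∀ v, R (v + 1) ≤ R v + 1 := by
    intro v
    rw [hRdef]
    exact max_le (by linarith) (le_trans (hstep1 v) (by linarith [htleR (le_refl v)]))
  have hrec : ∀ v, (R v < R (v + 1)) ↔ (∀ m, m < v + 1 → t m < t (v + 1)) := by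
    intro v
    rw [hRdef]
    constructor
    · intro h m hm
      have h1 : R v < t (v + 1) := by
        rcases lt_max_iff.mp h with h' | h'
        · exact absurd h' (lt_irrefl _)
        · exact h'
      exact lt_of_le_of_lt (htleR (Nat.lt_succ_iff.mp hm)) h1
    · intro h
      obtain ⟨m, hm, he⟩ := runMax_exists t v
      exact lt_max_iff.mpr (Or.inr (lt_of_le_of_lt he.le (h m (Nat.lt_succ_of_le hm))))
  have hgood : ∀ j, j < n → ((∀ m, 1 ≤ m → m < n → t (j + m) - t j ≤ (k : ℤ)) ↔
      (∀ m, m < j + n → t m < t (j + n))) := by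
    intro j hj
    have hjn : t (j + n) = t j + ((k : ℤ) + 1) := hshift j
    constructor
    · intro hg m hm
      rcases Nat.lt_or_ge m j with h' | h'
      · have h1 : t (m + n) = t m + ((k : ℤ) + 1) := hshift m
        have h3 : 1 ≤ m + n - j := by omega
        have h4 : m + n - j < n := by omega
        have h5 := hg (m + n - j) h3 h4
        rw [show j + (m + n - j) = m + n by omega] at h5
        omega
      · rcases Nat.eq_or_lt_of_le h' with h'' | h''
        · rw [← h'']
          omega
        · have h3 : 1 ≤ m - j := by omega
          have h4 : m - j < n := by omega
          have h5 := hg (m - j) h3 h4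
          rw [show j + (m - j) = m by omega] at h5
          omega
    · intro hr m h1 h2
      have := hr (j + m) (by omega)
      omega
  have hcard : ((Finset.range n).filter
        (fun j => ∀ m, 1 ≤ m → m < n → t (j + m) - t j ≤ (k : ℤ))).card
      = ((Finset.Ico (n - 1) ((n - 1) + n)).filter (fun v => R v < R (v + 1))).card := by
    apply Finset.card_nbij' (i := fun j => j + (n - 1)) (j := fun v => v - (n - 1))
    · intro j hj
      simp only [Finset.mem_coe, Finset.mem_filter, Finset.mem_range] at hj
      simp only [Finset.mem_coe, Finset.mem_filter, Finset.mem_Ico]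
      refine ⟨⟨by omega, by omega⟩, ?_⟩
      rw [hrec, show j + (n - 1) + 1 = j + n by omega]
      exact (hgood j hj.1).mp hj.2
    · intro v hv
      simp only [Finset.mem_coe, Finset.mem_filter, Finset.mem_Ico] at hv
      simp only [Finset.mem_coe, Finset.mem_filter, Finset.mem_range]
      refine ⟨by omega, ?_⟩
      apply (hgood (v - (n - 1)) (by omega)).mpr
      have := hv.2
      rw [hrec, show v + 1 = (v - (n - 1)) + n by omega] at this
      exact this
    · intro j hj
      simp only [Finset.mem_coe, Finset.mem_filter, Finset.mem_range] at hj
      dsimp only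
      omega
    · intro v hv
      simp only [Finset.mem_coe, Finset.mem_filter, Finset.mem_Ico] at hv
      dsimp only
      omega
  have hRtop : R ((n - 1) + n) = R (n - 1) + ((k : ℤ) + 1) := by
    apply le_antisymm
    · apply runMax_le
      intro m hm
      rcases Nat.lt_or_ge m n with h' | h'
      · have := htleR (show m ≤ n - 1 by omega)
        omega
      · have h1 : t (m - n) + ((k : ℤ) + 1) = t m := by
          have := hshift (m - n)
          rw [show m - n + n = m by omega] at this
          omega
        have := htleR (show m - n ≤ n - 1 by omega)
        omega
    · obtain ⟨m, hm, he⟩ := runMax_exists t (n - 1)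
      rw [← hR] at he
      have h1 : t (m + n) = t m + ((k : ℤ) + 1) := hshift m
      have h2 : t (m + n) ≤ R ((n - 1) + n) := htleR (by omega)
      omega
  have hcs := count_steps R hRmono hRstep (n - 1) n
  rw [hRtop] at hcs
  rw [hcard]
  omega

end KempAux


open MeasureTheory ProbabilityTheory Filter
open scoped ENNReal NNReal Topology
open Fin.NatCast

theorem stmt_5 {Ω : Type*} [MeasurableSpace Ω] (P : Measure Ω) [IsProbabilityMeasure P]
    (μ : Measure ℤ) [IsProbabilityMeasure μ]
    (X : ℕ → Ω → ℤ) (hmeas : ∀ i, Measurable (X i))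
    (hlaw : ∀ i, Measure.map (X i) P = μ)
    (hindep : iIndepFun X P)
    (hskipfree : ∀ i ω, X i ω ≤ 1)
    (S : ℕ → Ω → ℤ) (hS : ∀ n ω, S n ω = ∑ i ∈ Finset.range n, X i ω)
    (k : ℕ) (n : ℕ) (hn : k < n) :
    (P {ω | S n ω = (k : ℤ) + 1 ∧ ∀ m, 1 ≤ m → m < n → S m ω ≤ (k : ℤ)}).toReal
      = ((k + 1 : ℝ) / n) * (P {ω | S n ω = (k : ℤ) + 1}).toReal := by
  classical
  have hn0 : 0 < n := lt_of_le_of_lt (Nat.zero_le k) hn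
  haveI : NeZero n := ⟨hn0.ne'⟩
  set Y : Ω → (Fin n → ℤ) := fun ω i => X i ω with hY
  have hYmeas : Measurable Y := measurable_pi_iff.mpr fun i => hmeas i
  have hMeasAll : ∀ s : Set (Fin n → ℤ), MeasurableSet s := fun s =>
    s.to_countable.measurableSet
  set ps : (Fin n → ℤ) → ℕ → ℤ := fun z m => ∑ i ∈ Finset.range m, z (i : Fin n) with hps
  set A : Set (Fin n → ℤ) :=
    {z | ps z n = (k : ℤ) + 1 ∧ ∀ m, 1 ≤ m → m < n → ps z m ≤ (k : ℤ)} with hA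
  set B : Set (Fin n → ℤ) := {z | ps z n = (k : ℤ) + 1} with hB
  set G : Set (Fin n → ℤ) := {z | ∀ i, z i ≤ 1} with hG
  have hpsS : ∀ ω m, m ≤ n → S m ω = ps (Y ω) m := by
    intro ω m hm
    rw [hS]
    apply Finset.sum_congr rfl
    intro i hi
    have hiv : ((i : Fin n) : ℕ) = i := by
      rw [Fin.val_natCast]
      exact Nat.mod_eq_of_lt (lt_of_lt_of_le (Finset.mem_range.mp hi) hm)
    show X i ω = Y ω (i : Fin n)
    rw [hY]
    simp only [hiv]
  have hE1 : {ω | S n ω = (k : ℤ) + 1 ∧ ∀ m, 1 ≤ m → m < n → S m ω ≤ (k : ℤ)} = Y ⁻¹' A := by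
    ext ω
    simp only [Set.mem_setOf_eq, Set.mem_preimage, hA]
    constructor
    · rintro ⟨h1, h2⟩
      exact ⟨by rw [← hpsS ω n le_rfl]; exact h1,
        fun m hm1 hm2 => by rw [← hpsS ω m hm2.le]; exact h2 m hm1 hm2⟩
    · rintro ⟨h1, h2⟩
      exact ⟨by rw [hpsS ω n le_rfl]; exact h1,
        fun m hm1 hm2 => by rw [hpsS ω m hm2.le]; exact h2 m hm1 hm2⟩
  have hE2 : {ω | S n ω = (k : ℤ) + 1} = Y ⁻¹' B := by
    ext ω
    simp only [Set.mem_setOf_eq, Set.mem_preimage, hB]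
    rw [hpsS ω n le_rfl]
  set π : Measure (Fin n → ℤ) := Measure.pi (fun _ => μ) with hπdef
  have hπ : P.map Y = π := by
    apply Measure.ext_of_singleton
    intro a
    rw [Measure.map_apply hYmeas (hMeasAll _)]
    set a' : ℕ → ℤ := fun i => if h : i < n then a ⟨i, h⟩ else 0 with ha'
    have hpre : Y ⁻¹' {a} = ⋂ i ∈ Finset.range n, X i ⁻¹' {a' i} := by
      ext ω
      simp only [Set.mem_preimage, Set.mem_singleton_iff, Set.mem_iInter, Finset.mem_range]
      constructor
      · intro h i hi
        simp only [ha', hi, dif_pos]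
        rw [← h]
      · intro h
        funext i
        have h2 := h i.val i.isLt
        simp only [ha', i.isLt, dif_pos, Fin.eta] at h2
        exact h2
    rw [hpre, hindep.measure_inter_preimage_eq_mul (Finset.range n)
      (fun i _ => measurableSet_singleton (a' i))]
    have hone : ∀ i, P (X i ⁻¹' {a' i}) = μ {a' i} := by
      intro i
      rw [← hlaw i, Measure.map_apply (hmeas i) (measurableSet_singleton _)]
    simp only [hone]
    rw [show ({a} : Set (Fin n → ℤ)) = Set.pi Set.univ (fun i => {a i}) from
      (Set.univ_pi_singleton a).symm, hπdef, Measure.pi_pi,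
      ← Fin.prod_univ_eq_prod_range (fun i => μ {a' i}) n]
    apply Finset.prod_congr rfl
    intro i _
    congr 1
    simp only [ha', i.isLt, dif_pos, Fin.eta]
  haveI hπprob : IsProbabilityMeasure π := by
    rw [← hπ]
    exact Measure.isProbabilityMeasure_map hYmeas.aemeasurable
  set r : ℕ → (Fin n → ℤ) → (Fin n → ℤ) := fun j z i => z (i + (j : Fin n)) with hr
  have hrmeas : ∀ j, Measurable (r j) :=
    fun j => measurable_pi_iff.mpr fun i => measurable_pi_apply _
  have hrot : ∀ j, π.map (r j) = π := by
    intro j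
    apply Measure.ext_of_singleton
    intro a
    rw [Measure.map_apply (hrmeas j) (hMeasAll _)]
    have hpre : r j ⁻¹' {a} = {fun i => a (i - (j : Fin n))} := by
      ext z
      simp only [Set.mem_preimage, Set.mem_singleton_iff, funext_iff]
      constructor
      · intro h i
        have h2 := h (i - (j : Fin n))
        rwa [show r j z (i - (j : Fin n)) = z (i - (j : Fin n) + (j : Fin n)) from rfl,
          sub_add_cancel] at h2
      · intro h i
        rw [show r j z i = z (i + (j : Fin n)) from rfl, h (i + (j : Fin n)),
          add_sub_cancel_right]
    rw [hpre,
      show ({a} : Set (Fin n → ℤ)) = Set.pi Set.univ (fun i => {a i}) from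
        (Set.univ_pi_singleton a).symm,
      show ({fun i => a (i - (j : Fin n))} : Set (Fin n → ℤ))
          = Set.pi Set.univ (fun i => {a (i - (j : Fin n))}) from
        (Set.univ_pi_singleton _).symm,
      hπdef, Measure.pi_pi, Measure.pi_pi]
    exact Fintype.prod_equiv (Equiv.subRight ((j : Fin n))) _ _ (fun i => rfl)
  have hGc : π Gᶜ = 0 := by
    rw [← hπ, Measure.map_apply hYmeas (hMeasAll _)]
    have : Y ⁻¹' Gᶜ = ∅ :=
      Set.eq_empty_iff_forall_notMem.mpr (fun ω h => h (fun i => hskipfree i ω))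
    rw [this, measure_empty]
  set A' : Set (Fin n → ℤ) := A ∩ G with hA'
  set B' : Set (Fin n → ℤ) := B ∩ G with hB'
  have hinter : ∀ s : Set (Fin n → ℤ), π (s ∩ G) = π s := by
    intro s
    refine le_antisymm (measure_mono Set.inter_subset_left) ?_
    calc π s ≤ π ((s ∩ G) ∪ Gᶜ) := measure_mono (fun x hx => by
          by_cases hxg : x ∈ G
          · exact Or.inl ⟨hx, hxg⟩
          · exact Or.inr hxg)
      _ ≤ π (s ∩ G) + π Gᶜ := measure_union_le _ _
      _ = π (s ∩ G) := by rw [hGc, add_zero]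
  -- key pointwise count
  have hcount : ∀ z, (((Finset.range n).filter (fun j => r j z ∈ A')).card : ℕ)
      = if z ∈ B' then k + 1 else 0 := by
    intro z
    by_cases hzG : z ∈ G
    · set y : ℕ → ℤ := fun i => z (i : Fin n) with hy
      have hyper : ∀ m, y (m + n) = y m := by
        intro m
        simp only [hy]
        congr 1
        push_cast
        simp
      have hyle : ∀ m, y m ≤ 1 := fun m => hzG _
      have hps_eq : ∀ m, ps z m = ∑ i ∈ Finset.range m, y i := fun m => rfl
      have hps_shift : ∀ j m, ps (r j z) m = ps z (j + m) - ps z j := by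
        intro j m
        have h1 : ∀ p : ℕ, r j z ((p : ℕ) : Fin n) = y (j + p) := by
          intro p
          show z (((p : ℕ) : Fin n) + (j : Fin n)) = z (((j + p : ℕ) : Fin n))
          congr 1
          push_cast
          exact add_comm _ _
        calc ps (r j z) m = ∑ p ∈ Finset.range m, y (j + p) :=
              Finset.sum_congr rfl (fun p _ => h1 p)
          _ = ps z (j + m) - ps z j := by
              rw [KempAux.sum_shift y j m, hps_eq, hps_eq]
      by_cases hzB : z ∈ B
      · rw [if_pos ⟨hzB, hzG⟩]
        have hsum : ∑ i ∈ Finset.range n, y i = (k : ℤ) + 1 := by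
          rw [← hps_eq]; exact hzB
        have hshift : ∀ m, ps z (m + n) = ps z m + ((k : ℤ) + 1) := by
          intro m
          have h2 := KempAux.tshift n y hyper m
          rw [hsum] at h2
          rw [hps_eq, hps_eq]
          exact h2
        rw [← KempAux.cycle_count n k hn0 y hyper hyle hsum]
        congr 1
        ext j
        simp only [Finset.mem_filter, Finset.mem_range, and_congr_right_iff]
        intro hj
        constructor
        · intro hmem m hm1 hm2
          have h3 := hmem.1.2 m hm1 hm2
          rw [hps_shift j m, hps_eq, hps_eq] at h3
          exact h3
        · intro hgood
          refine ⟨⟨?_, ?_⟩, ?_⟩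
          · rw [hps_shift j n, hshift j]
            ring
          · intro m hm1 hm2
            rw [hps_shift j m, hps_eq, hps_eq]
            exact hgood m hm1 hm2
          · intro i
            exact hzG _
      · rw [if_neg (fun h => hzB h.1), Finset.card_eq_zero, Finset.filter_eq_empty_iff]
        intro j _
        intro hmem
        apply hzB
        have h3 := hmem.1.1
        rw [hps_shift j n] at h3
        have h4 := KempAux.tshift n y hyper j
        rw [hps_eq (j + n), hps_eq j] at h3
        have h5 : ∑ i ∈ Finset.range n, y i = (k : ℤ) + 1 := by omega
        show ps z n = (k : ℤ) + 1
        rw [hps_eq n]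
        exact h5
    · rw [if_neg (fun h => hzG h.2), Finset.card_eq_zero, Finset.filter_eq_empty_iff]
      intro j _
      intro hmem
      apply hzG
      intro i
      have h2 := hmem.2 (i - (j : Fin n))
      rwa [show r j z (i - (j : Fin n)) = z (i - (j : Fin n) + (j : Fin n)) from rfl,
        sub_add_cancel] at h2
  -- measure of a set as a tsum of point masses
  have hterm : ∀ s : Set (Fin n → ℤ),
      π s = ∑' b : (Fin n → ℤ), Set.indicator s (fun b => π {b}) b := by
    intro s
    have h1 := tsum_measure_preimage_singleton (μ := π) s.to_countable (f := id)
      (fun y _ => hMeasAll _)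
    simp only [Set.preimage_id] at h1
    rw [← tsum_subtype s (fun b => π {b})]
    exact h1.symm
  have hA'inv : ∀ j, π (r j ⁻¹' A') = π A' := by
    intro j
    conv_rhs => rw [← hrot j]
    rw [Measure.map_apply (hrmeas j) (hMeasAll _)]
  have key : (n : ℝ≥0∞) * π A' = ((k : ℝ≥0∞) + 1) * π B' := by
    have lhs : ∑ j ∈ Finset.range n, π (r j ⁻¹' A') = (n : ℝ≥0∞) * π A' := by
      simp [hA'inv, Finset.sum_const]
    rw [← lhs]
    calc ∑ j ∈ Finset.range n, π (r j ⁻¹' A')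
        = ∑ j ∈ Finset.range n, ∑' b, Set.indicator (r j ⁻¹' A') (fun b => π {b}) b :=
          Finset.sum_congr rfl (fun j _ => hterm _)
      _ = ∑' b, ∑ j ∈ Finset.range n, Set.indicator (r j ⁻¹' A') (fun b => π {b}) b :=
          (Summable.tsum_finsetSum (fun i _ => ENNReal.summable)).symm
      _ = ∑' b, ((k : ℝ≥0∞) + 1) * Set.indicator B' (fun b => π {b}) b := by
          apply tsum_congr
          intro b
          simp only [Set.indicator_apply, Set.mem_preimage]
          have hsplit : ∀ j, (if r j b ∈ A' then π {b} else 0)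
              = (if r j b ∈ A' then (1 : ℝ≥0∞) else 0) * π {b} := by
            intro j; split <;> simp
          rw [Finset.sum_congr rfl (fun j _ => hsplit j), ← Finset.sum_mul,
            Finset.sum_boole, hcount b]
          split
          · push_cast
            ring
          · simp
      _ = ((k : ℝ≥0∞) + 1) * ∑' b, Set.indicator B' (fun b => π {b}) b :=
          ENNReal.tsum_mul_left
      _ = ((k : ℝ≥0∞) + 1) * π B' := by rw [← hterm B']
  rw [hE1, hE2, ← Measure.map_apply hYmeas (hMeasAll _),
    ← Measure.map_apply hYmeas (hMeasAll _), hπ, ← hinter A, ← hinter B, ← hA', ← hB']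
  have hkey2 := congrArg ENNReal.toReal key
  rw [ENNReal.toReal_mul, ENNReal.toReal_mul] at hkey2
  have hnr : ((n : ℝ≥0∞)).toReal = (n : ℝ) := by simp
  have hkr : (((k : ℝ≥0∞)) + 1).toReal = (k : ℝ) + 1 := by
    rw [ENNReal.toReal_add (by simp) (by simp)]
    simp
  rw [hnr, hkr] at hkey2
  have hnne : (n : ℝ) ≠ 0 := Nat.cast_ne_zero.mpr hn0.ne'
  field_simp
  linarith [hkey2]
end

section
/- Let A_n = S_1 + ... + S_n be an integrated random walk whose increment law μ satisfies μ((−∞,−ε)) > 0 for some ε > 0, and let T_x = inf{n ≥ 1 : A_n > x}. Then for every x ≥ 0 there exists k (any integer with kε ≥ x) such that (μ((−∞,−ε)))^k · P[T_x > n] ≤ P[T_0 > n] ≤ P[T_x > n] for all n; hence P[T_x > n] ≍ P[T_0 > n]. -/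
open MeasureTheory ProbabilityTheory Filter
open scoped ENNReal NNReal Topology

lemma aux_map_pi {Ω : Type*} [MeasurableSpace Ω] (P : Measure Ω) [IsProbabilityMeasure P]
    (μ : Measure ℝ) [IsProbabilityMeasure μ]
    (X : ℕ → Ω → ℝ) (hmeas : ∀ i, Measurable (X i))
    (hlaw : ∀ i, Measure.map (X i) P = μ)
    (hindep : iIndepFun X P)
    {n : ℕ} (g : Fin n → ℕ) (hg : Function.Injective g) :
    Measure.map (fun ω (i : Fin n) => X (g i) ω) P = Measure.pi (fun _ => μ) := by
  refine (Measure.pi_eq fun s hs => ?_).symm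
  rw [Measure.map_apply (measurable_pi_iff.mpr fun i => hmeas _) (MeasurableSet.univ_pi hs)]
  set sets : ℕ → Set ℝ := Function.extend g s fun _ => Set.univ with hsets
  have hset_g : ∀ i, sets (g i) = s i := fun i => hg.extend_apply _ _ i
  have hpre : (fun ω (i : Fin n) => X (g i) ω) ⁻¹' (Set.univ.pi s)
      = ⋂ j ∈ Finset.image g Finset.univ, X j ⁻¹' sets j := by
    ext ω
    simp only [Set.mem_preimage, Set.mem_pi, Set.mem_univ, forall_true_left,
      Set.mem_iInter, Finset.mem_image, Finset.mem_univ, true_and]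
    constructor
    · rintro h j ⟨i, rfl⟩
      rw [hset_g]; exact h i
    · intro h i
      have := h (g i) ⟨i, rfl⟩
      rwa [hset_g] at this
  have hmeas' : ∀ j ∈ Finset.image g Finset.univ, MeasurableSet (sets j) := by
    intro j hj
    obtain ⟨i, _, rfl⟩ := Finset.mem_image.mp hj
    rw [hset_g]; exact hs i
  rw [hpre, hindep.measure_inter_preimage_eq_mul _ hmeas',
    Finset.prod_image (fun a _ b _ h => hg h)]
  refine Finset.prod_congr rfl fun i _ => ?_
  rw [hset_g, ← hlaw (g i), Measure.map_apply (hmeas _) (hs i)]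

theorem stmt_8 {Ω : Type*} [MeasurableSpace Ω] (P : Measure Ω) [IsProbabilityMeasure P]
    (μ : Measure ℝ) [IsProbabilityMeasure μ]
    (X : ℕ → Ω → ℝ) (hmeas : ∀ i, Measurable (X i))
    (hlaw : ∀ i, Measure.map (X i) P = μ)
    (hindep : iIndepFun X P)
    (S : ℕ → Ω → ℝ) (hS : ∀ n ω, S n ω = ∑ i ∈ Finset.range n, X i ω)
    (A : ℕ → Ω → ℝ) (hA : ∀ n ω, A n ω = ∑ k ∈ Finset.Icc 1 n, S k ω)
    (ε : ℝ) (hε : 0 < ε) (hneg : 0 < μ (Set.Iio (-ε)))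
    (x : ℝ) (hx : 0 ≤ x) :
    ∃ k : ℕ, x ≤ k * ε ∧ ∀ n : ℕ,
      (μ (Set.Iio (-ε))) ^ k * P {ω | ∀ m, 1 ≤ m → m ≤ n → A m ω ≤ x}
          ≤ P {ω | ∀ m, 1 ≤ m → m ≤ n → A m ω ≤ 0}
      ∧ P {ω | ∀ m, 1 ≤ m → m ≤ n → A m ω ≤ 0}
          ≤ P {ω | ∀ m, 1 ≤ m → m ≤ n → A m ω ≤ x} := by
  set c := μ (Set.Iio (-ε)) with hc
  set k := ⌈x / ε⌉₊ with hkdef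
  have hk : x ≤ (k : ℝ) * ε := (div_le_iff₀ hε).mp (Nat.le_ceil _)
  refine ⟨k, hk, fun n => ?_⟩
  constructor
  swap
  · exact measure_mono fun ω hω m h1 h2 => le_trans (hω m h1 h2) hx
  -- main inequality
  set B : Set Ω := {ω | ∀ i, i < k → X i ω < -ε} with hBdef
  set C : Set Ω :=
    {ω | ∀ m, 1 ≤ m → m ≤ n →
      (∑ t ∈ Finset.Icc 1 m, ∑ i ∈ Finset.range t, X (k + i) ω) ≤ x} with hCdef
  have hIoc : ∀ m : ℕ, Finset.Icc 1 m = Finset.Ioc 0 m := by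
    intro m; ext a; simp only [Finset.mem_Icc, Finset.mem_Ioc]; omega
  -- Step 1: inclusion
  have hincl : B ∩ C ⊆ {ω | ∀ m, 1 ≤ m → m ≤ n → A m ω ≤ 0} := by
    rintro ω ⟨hB, hC⟩ m h1 h2
    have hX : ∀ i, i < k → X i ω ≤ -ε := fun i hi => le_of_lt (hB i hi)
    have hSle : ∀ m', m' ≤ k → S m' ω ≤ -((m' : ℝ) * ε) := by
      intro m' hm'
      rw [hS]
      calc ∑ i ∈ Finset.range m', X i ω ≤ ∑ _i ∈ Finset.range m', (-ε) :=
            Finset.sum_le_sum fun i hi =>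
              hX i (lt_of_lt_of_le (Finset.mem_range.mp hi) hm')
        _ = -((m' : ℝ) * ε) := by
            rw [Finset.sum_const, Finset.card_range, nsmul_eq_mul]; ring
    have hAle : ∀ m', m' ≤ k → A m' ω ≤ 0 := by
      intro m' hm'
      rw [hA]
      apply Finset.sum_nonpos
      intro t ht
      have ht' := Finset.mem_Icc.mp ht
      have h3 := hSle t (le_trans ht'.2 hm')
      nlinarith [hε.le, (Nat.cast_nonneg t : (0:ℝ) ≤ t)]
    by_cases hmk : m ≤ k
    · exact hAle m hmk
    · push_neg at hmk
      obtain ⟨j, rfl⟩ : ∃ j, m = k + j := ⟨m - k, by omega⟩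
      have hj1 : 1 ≤ j := by omega
      have hjn : j ≤ n := by omega
      have hSadd : ∀ t, S (k + t) ω = S k ω + ∑ i ∈ Finset.range t, X (k + i) ω := by
        intro t; simp only [hS]; rw [Finset.sum_range_add]
      have hsplit : A (k + j) ω
          = A k ω + (j : ℝ) * S k ω
            + ∑ t ∈ Finset.Icc 1 j, ∑ i ∈ Finset.range t, X (k + i) ω := by
        rw [hA, hA]
        simp only [hIoc]
        rw [← Finset.sum_Ioc_consecutive (fun t => S t ω) (Nat.zero_le k) (Nat.le_add_right k j)]
        have e1 : ∑ t ∈ Finset.Ioc k (k + j), S t ω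
            = ∑ t ∈ Finset.Ioc 0 j, S (k + t) ω := by
          rw [show Finset.Ioc k (k + j) = Finset.Ioc (k + 0) (k + j) by rw [Nat.add_zero],
            ← Finset.map_add_left_Ioc, Finset.sum_map]
          rfl
        rw [e1]
        have e2 : ∑ t ∈ Finset.Ioc 0 j, S (k + t) ω
            = ∑ t ∈ Finset.Ioc 0 j,
                (S k ω + ∑ i ∈ Finset.range t, X (k + i) ω) :=
          Finset.sum_congr rfl fun t _ => hSadd t
        rw [e2, Finset.sum_add_distrib, Finset.sum_const, Nat.card_Ioc, nsmul_eq_mul]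
        simp only [Nat.sub_zero]
        ring
      have hC' := hC j hj1 hjn
      have hAk := hAle k le_rfl
      have hSk := hSle k le_rfl
      have hj1' : (1 : ℝ) ≤ (j : ℝ) := by exact_mod_cast hj1
      have hkε : (0 : ℝ) ≤ (k : ℝ) * ε := by positivity
      have h5 : (j : ℝ) * S k ω ≤ (j : ℝ) * (-((k : ℝ) * ε)) :=
        mul_le_mul_of_nonneg_left hSk (by linarith)
      have h6 : (j : ℝ) * (-((k : ℝ) * ε)) ≤ -((k : ℝ) * ε) := by nlinarith
      rw [hsplit]
      linarith
  -- Step 2: independence setup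
  set Sfin : Finset ℕ := Finset.range k with hSfin
  set Tfin : Finset ℕ := Finset.image (fun i => k + i) (Finset.range n) with hTfin
  have hmemT : ∀ i, i < n → (k + i) ∈ Tfin := fun i hi =>
    Finset.mem_image.mpr ⟨i, Finset.mem_range.mpr hi, rfl⟩
  have hdisj : Disjoint Sfin Tfin := by
    rw [Finset.disjoint_left]
    intro a haS haT
    obtain ⟨i, _, rfl⟩ := Finset.mem_image.mp haT
    have := Finset.mem_range.mp haS
    omega
  have hindepST := hindep.indepFun_finset Sfin Tfin hdisj hmeas
  set BS : Set (↥Sfin → ℝ) := Set.univ.pi fun _ => Set.Iio (-ε) with hBS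
  set CT : Set (↥Tfin → ℝ) :=
    ⋂ m ∈ Finset.Icc 1 n, {y : ↥Tfin → ℝ |
      (∑ t ∈ Finset.Icc 1 m, ∑ i ∈ Finset.range t,
        (if h : (k + i) ∈ Tfin then y ⟨k + i, h⟩ else 0)) ≤ x} with hCT
  have hBSm : MeasurableSet BS := MeasurableSet.univ_pi fun _ => measurableSet_Iio
  have hCTm : MeasurableSet CT := by
    refine MeasurableSet.biInter (Finset.Icc 1 n).countable_toSet fun m _ => ?_
    refine measurableSet_le ?_ measurable_const
    refine Finset.measurable_sum _ fun t _ => ?_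
    refine Finset.measurable_sum _ fun i _ => ?_
    by_cases h : (k + i) ∈ Tfin
    · simp only [dif_pos h]; exact measurable_pi_apply _
    · simp only [dif_neg h]; exact measurable_const
  have esumT : ∀ (m : ℕ), m ≤ n → ∀ (y : ↥Tfin → ℝ) (f : ℕ → ℝ),
      (∀ i : ↥Tfin, y i = f ↑i) →
      (∑ t ∈ Finset.Icc 1 m, ∑ i ∈ Finset.range t,
        (if h : (k + i) ∈ Tfin then y ⟨k + i, h⟩ else 0))
        = ∑ t ∈ Finset.Icc 1 m, ∑ i ∈ Finset.range t, f (k + i) := by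
    intro m hm y f hyf
    refine Finset.sum_congr rfl fun t ht => Finset.sum_congr rfl fun i hi => ?_
    have hin : (k + i) ∈ Tfin := hmemT i (by
      have h1 := Finset.mem_range.mp hi
      have h2 := (Finset.mem_Icc.mp ht).2
      omega)
    rw [dif_pos hin]
    exact hyf _
  have hBpre : (fun a (i : ↥Sfin) => X (↑i) a) ⁻¹' BS = B := by
    ext ω
    simp only [Set.mem_preimage, hBS, Set.mem_pi, Set.mem_univ, forall_true_left, hBdef,
      Set.mem_setOf_eq, Set.mem_Iio, Subtype.forall, hSfin, Finset.mem_range]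
  have hCpre : (fun a (i : ↥Tfin) => X (↑i) a) ⁻¹' CT = C := by
    ext ω
    simp only [Set.mem_preimage, hCT, Set.mem_iInter, Set.mem_setOf_eq, Finset.mem_Icc,
      hCdef, and_imp]
    constructor
    · intro h m h1 h2
      have := h m h1 h2
      rwa [esumT m h2 _ (fun j => X j ω) (fun i => rfl)] at this
    · intro h m h1 h2
      rw [esumT m h2 _ (fun j => X j ω) (fun i => rfl)]
      exact h m h1 h2
  -- P B = c ^ k
  have hBinter : B = ⋂ i ∈ Finset.range k, X i ⁻¹' Set.Iio (-ε) := by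
    ext ω; simp [hBdef, Set.mem_iInter]
  have hPB : P B = c ^ k := by
    rw [hBinter, hindep.measure_inter_preimage_eq_mul (Finset.range k)
      (sets := fun _ => Set.Iio (-ε)) (fun i _ => measurableSet_Iio)]
    have heq : ∀ i ∈ Finset.range k, P (X i ⁻¹' Set.Iio (-ε)) = c := by
      intro i _
      rw [← Measure.map_apply (hmeas i) measurableSet_Iio, hlaw i]
    rw [Finset.prod_congr rfl heq, Finset.prod_const, Finset.card_range]
  -- Step 3: P C = P Dx
  have hsh_inj : Function.Injective fun i : Fin n => k + (i : ℕ) := by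
    intro a b h
    have h' : k + (a : ℕ) = k + (b : ℕ) := h
    exact Fin.val_injective (Nat.add_left_cancel h')
  have hmap1 := aux_map_pi P μ X hmeas hlaw hindep (fun i : Fin n => (i : ℕ)) Fin.val_injective
  have hmap2 := aux_map_pi P μ X hmeas hlaw hindep _ hsh_inj
  set G : Set (Fin n → ℝ) :=
    ⋂ m ∈ Finset.Icc 1 n, {y : Fin n → ℝ |
      (∑ t ∈ Finset.Icc 1 m, ∑ i ∈ Finset.range t,
        (if h : i < n then y ⟨i, h⟩ else 0)) ≤ x} with hG
  have hGm : MeasurableSet G := by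
    refine MeasurableSet.biInter (Finset.Icc 1 n).countable_toSet fun m _ => ?_
    refine measurableSet_le ?_ measurable_const
    refine Finset.measurable_sum _ fun t _ => ?_
    refine Finset.measurable_sum _ fun i _ => ?_
    by_cases h : i < n
    · simp only [dif_pos h]; exact measurable_pi_apply _
    · simp only [dif_neg h]; exact measurable_const
  have esumG : ∀ (m : ℕ), m ≤ n → ∀ (y : Fin n → ℝ) (f : ℕ → ℝ),
      (∀ i : Fin n, y i = f ↑i) →
      (∑ t ∈ Finset.Icc 1 m, ∑ i ∈ Finset.range t,
        (if h : i < n then y ⟨i, h⟩ else 0))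
        = ∑ t ∈ Finset.Icc 1 m, ∑ i ∈ Finset.range t, f i := by
    intro m hm y f hyf
    refine Finset.sum_congr rfl fun t ht => Finset.sum_congr rfl fun i hi => ?_
    have hin : i < n := by
      have h1 := Finset.mem_range.mp hi
      have h2 := (Finset.mem_Icc.mp ht).2
      omega
    rw [dif_pos hin]
    exact hyf _
  have hmeasf1 : Measurable fun ω (i : Fin n) => X (i : ℕ) ω :=
    measurable_pi_iff.mpr fun i => hmeas _
  have hmeasf2 : Measurable fun ω (i : Fin n) => X (k + (i : ℕ)) ω :=
    measurable_pi_iff.mpr fun i => hmeas _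
  have hpre1 : (fun ω (i : Fin n) => X ((i : ℕ)) ω) ⁻¹' G
      = {ω | ∀ m, 1 ≤ m → m ≤ n → A m ω ≤ x} := by
    ext ω
    simp only [Set.mem_preimage, hG, Set.mem_iInter, Set.mem_setOf_eq, Finset.mem_Icc, and_imp]
    constructor
    · intro h m h1 h2
      have := h m h1 h2
      rw [esumG m h2 _ (fun j => X j ω) (fun i => rfl)] at this
      rw [hA]
      simp only [hS]
      exact this
    · intro h m h1 h2
      rw [esumG m h2 _ (fun j => X j ω) (fun i => rfl)]
      have := h m h1 h2
      rw [hA] at this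
      simp only [hS] at this
      exact this
  have hpre2 : (fun ω (i : Fin n) => X (k + (i : ℕ)) ω) ⁻¹' G = C := by
    ext ω
    simp only [Set.mem_preimage, hG, Set.mem_iInter, Set.mem_setOf_eq, Finset.mem_Icc,
      hCdef, and_imp]
    constructor
    · intro h m h1 h2
      have := h m h1 h2
      rwa [esumG m h2 _ (fun j => X (k + j) ω) (fun i => rfl)] at this
    · intro h m h1 h2
      rw [esumG m h2 _ (fun j => X (k + j) ω) (fun i => rfl)]
      exact h m h1 h2
  have hPC : P C = P {ω | ∀ m, 1 ≤ m → m ≤ n → A m ω ≤ x} := by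
    rw [← hpre1, ← hpre2, ← Measure.map_apply hmeasf2 hGm, ← Measure.map_apply hmeasf1 hGm,
      hmap1, hmap2]
  -- assemble
  have hBC := hindepST.measure_inter_preimage_eq_mul BS CT hBSm hCTm
  rw [hBpre, hCpre, hPB] at hBC
  calc c ^ k * P {ω | ∀ m, 1 ≤ m → m ≤ n → A m ω ≤ x}
      = c ^ k * P C := by rw [hPC]
    _ = P (B ∩ C) := hBC.symm
    _ ≤ P {ω | ∀ m, 1 ≤ m → m ≤ n → A m ω ≤ 0} := measure_mono hincl
end

section
/- For every H ∈ (0,1] and t ≥ 0, the correlation function C_H(t) = 2H e^{−Ht} ∫_0^1 (u(u + e^t − 1))^{H−1/2} du of the Lamperti transform of the Riemann–Liouville process of order H − 1/2 satisfies the inequality C_H(t) ≤ cosh(Ht) − 2^{2H−1} (sinh(t/2))^{2H}, i.e., it is dominated by the correlation function of the Lamperti transform of fractional Brownian motion with the same Hurst index, with equality when H = 1/2. -/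
open MeasureTheory ProbabilityTheory Filter
open scoped ENNReal NNReal Topology

theorem stmt_16 (H t : ℝ) (hH : H ∈ Set.Ioc (0 : ℝ) 1) (ht : 0 ≤ t) :
    2 * H * Real.exp (-(H * t)) * ∫ u in (0:ℝ)..1, (u * (u + Real.exp t - 1)) ^ (H - 1/2)
      ≤ Real.cosh (H * t) - 2 ^ (2 * H - 1) * Real.sinh (t / 2) ^ (2 * H)
    ∧ (H = 1/2 →
      2 * H * Real.exp (-(H * t)) * ∫ u in (0:ℝ)..1, (u * (u + Real.exp t - 1)) ^ (H - 1/2)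
        = Real.cosh (H * t) - 2 ^ (2 * H - 1) * Real.sinh (t / 2) ^ (2 * H)) := by
  obtain ⟨hH0, hH1⟩ := hH
  constructor
  · -- main inequality
    set a : ℝ := Real.exp t - 1 with ha_def
    have ha : 0 ≤ a := by
      have := Real.one_le_exp ht
      rw [ha_def]; linarith
    have hrw : ∀ u : ℝ, u + Real.exp t - 1 = u + a := fun u => by rw [ha_def]; ring
    have hr : (-1 : ℝ) < 2 * H - 1 := by linarith
    -- the correlation function of the Lamperti fBm, in exponential form
    have hE : Real.exp (-(H * t)) * ((1 + a) ^ (2 * H)) = Real.exp (H * t) := by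
      have h1 : 1 + a = Real.exp t := by rw [ha_def]; ring
      rw [h1, ← Real.exp_mul, ← Real.exp_add]
      ring_nf
    have hsinh : Real.sinh (t / 2) = a / 2 * Real.exp (-(t / 2)) := by
      rw [Real.sinh_eq, ha_def]
      have h2 : Real.exp t * Real.exp (-(t / 2)) = Real.exp (t / 2) := by
        rw [← Real.exp_add]; ring_nf
      linear_combination (-(1:ℝ)/2) * h2
    have hpow : (2:ℝ) ^ (2 * H - 1) * Real.sinh (t / 2) ^ (2 * H)
        = a ^ (2 * H) * Real.exp (-(H * t)) / 2 := by
      rw [hsinh, Real.mul_rpow (by positivity) (Real.exp_pos _).le,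
        Real.div_rpow ha (by norm_num), ← Real.exp_mul,
        Real.rpow_sub (by norm_num : (0:ℝ) < 2), Real.rpow_one]
      have hexp : -(t / 2) * (2 * H) = -(H * t) := by ring
      rw [hexp]
      have h2H : (2:ℝ) ^ (2 * H) ≠ 0 := by positivity
      field_simp
    have hRHS : Real.cosh (H * t) - 2 ^ (2 * H - 1) * Real.sinh (t / 2) ^ (2 * H)
        = Real.exp (-(H * t)) * (1 + ((1 + a) ^ (2 * H) - a ^ (2 * H))) / 2 := by
      rw [Real.cosh_eq, hpow]
      linear_combination (-(1:ℝ)/2) * hE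
    -- pointwise AM-GM bound
    have hptwise : ∀ u ∈ Set.Ioc (0:ℝ) 1,
        (u * (u + a)) ^ (H - 1/2) ≤ (u ^ (2*H-1) + (u+a) ^ (2*H-1)) / 2 := by
      intro u hu
      have hu0 : 0 < u := hu.1
      have hua : 0 < u + a := by linarith
      rw [Real.mul_rpow hu0.le hua.le]
      have hx : u ^ (2*H-1) = u ^ (H-1/2) * u ^ (H-1/2) := by
        rw [← Real.rpow_add hu0]; ring_nf
      have hy : (u+a) ^ (2*H-1) = (u+a) ^ (H-1/2) * (u+a) ^ (H-1/2) := by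
        rw [← Real.rpow_add hua]; ring_nf
      rw [hx, hy]
      nlinarith [sq_nonneg (u ^ (H-1/2) - (u+a) ^ (H-1/2))]
    -- integrability of the dominating function
    have hg1 : IntervalIntegrable (fun u : ℝ => u ^ (2*H-1)) volume 0 1 :=
      intervalIntegral.intervalIntegrable_rpow' hr
    have hg2 : IntervalIntegrable (fun u : ℝ => (u + a) ^ (2*H-1)) volume 0 1 := by
      have := (intervalIntegral.intervalIntegrable_rpow' hr (a := a) (b := 1 + a)).comp_add_right a
      simpa using this
    have hg : IntervalIntegrable (fun u : ℝ => (u ^ (2*H-1) + (u+a) ^ (2*H-1)) / 2) volume 0 1 :=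
      (hg1.add hg2).div_const 2
    -- comparison of integrals
    have hmono : (∫ u in (0:ℝ)..1, (u * (u + a)) ^ (H - 1/2))
        ≤ ∫ u in (0:ℝ)..1, (u ^ (2*H-1) + (u+a) ^ (2*H-1)) / 2 := by
      rw [intervalIntegral.integral_of_le zero_le_one,
        intervalIntegral.integral_of_le zero_le_one]
      apply MeasureTheory.integral_mono_of_nonneg
      · filter_upwards [ae_restrict_mem measurableSet_Ioc] with u hu
        exact Real.rpow_nonneg (mul_nonneg hu.1.le (by linarith [hu.1])) _
      · exact hg.1
      · filter_upwards [ae_restrict_mem measurableSet_Ioc] with u hu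
        exact hptwise u hu
    -- exact values of the dominating integrals
    have h2H : 2*H-1+1 = 2*H := by ring
    have hI1 : (∫ u in (0:ℝ)..1, u ^ (2*H-1)) = 1/(2*H) := by
      rw [integral_rpow (Or.inl hr), h2H, Real.one_rpow,
        Real.zero_rpow (by positivity : (2*H : ℝ) ≠ 0)]
      ring
    have hI2 : (∫ u in (0:ℝ)..1, (u + a) ^ (2*H-1))
        = ((1+a) ^ (2*H) - a ^ (2*H)) / (2*H) := by
      rw [intervalIntegral.integral_comp_add_right (fun u => u ^ (2*H-1)) a,
        integral_rpow (Or.inl hr), h2H, zero_add]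
    have hIg : (∫ u in (0:ℝ)..1, (u ^ (2*H-1) + (u+a) ^ (2*H-1)) / 2)
        = (1/(2*H) + ((1+a) ^ (2*H) - a ^ (2*H)) / (2*H)) / 2 := by
      rw [intervalIntegral.integral_div, intervalIntegral.integral_add hg1 hg2, hI1, hI2]
    calc 2 * H * Real.exp (-(H * t)) * ∫ u in (0:ℝ)..1, (u * (u + Real.exp t - 1)) ^ (H - 1/2)
        = 2 * H * Real.exp (-(H * t)) * ∫ u in (0:ℝ)..1, (u * (u + a)) ^ (H - 1/2) := by
          simp only [hrw]
      _ ≤ 2 * H * Real.exp (-(H * t))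
            * ((1/(2*H) + ((1+a) ^ (2*H) - a ^ (2*H)) / (2*H)) / 2) := by
          exact mul_le_mul_of_nonneg_left (hmono.trans_eq hIg) (by positivity)
      _ = Real.exp (-(H * t)) * (1 + ((1 + a) ^ (2 * H) - a ^ (2 * H))) / 2 := by
          field_simp
      _ = Real.cosh (H * t) - 2 ^ (2 * H - 1) * Real.sinh (t / 2) ^ (2 * H) := hRHS.symm
  · -- equality when H = 1/2
    intro h
    subst h
    have h0 : (1:ℝ)/2 - 1/2 = 0 := by norm_num
    have h1 : 2 * ((1:ℝ)/2) - 1 = 0 := by norm_num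
    have h2 : 2 * ((1:ℝ)/2) = 1 := by norm_num
    simp only [h0, h1, h2, Real.rpow_zero, Real.rpow_one,
      intervalIntegral.integral_const, smul_eq_mul]
    have h3 : (1:ℝ)/2 * t = t/2 := by ring
    have h4 : (1:ℝ) - 1 = 0 := by norm_num
    rw [h3, h4, Real.rpow_zero]
    have h5 := Real.cosh_sub_sinh (t/2)
    linarith
end

section
/- The correlation function C_H(t) = 2H e^{−Ht} ∫_0^1 (u(u + e^t − 1))^{H−1/2} du admits for H ∈ (0,1) the first-order expansion at zero C_H(t) = 1 − (Γ(1−H) Γ(1/2 + H)/√π) (t/2)^{2H} + o(t^{2H}) as t → 0+. -/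
open MeasureTheory ProbabilityTheory Filter Asymptotics
open scoped ENNReal NNReal Topology

open Set

lemma aux_rpow_le_max {l u x p : ℝ} (hl : 0 < l) (h1 : l ≤ x) (h2 : x ≤ u) :
    x ^ p ≤ max (l ^ p) (u ^ p) := by
  rcases le_or_gt 0 p with hp | hp
  · exact le_max_of_le_right (Real.rpow_le_rpow (by linarith) h2 hp)
  · refine le_max_of_le_left ?_
    exact Real.antitoneOn_rpow_Ioi_of_exponent_nonpos hp.le
      (mem_Ioi.2 hl) (mem_Ioi.2 (hl.trans_le h1)) h1

lemma aux_abs_one_sub_rpow {p u : ℝ} (hp1 : -(1/2) ≤ p) (hp2 : p ≤ 2)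
    (hu : 0 ≤ u) (hu2 : u ≤ 1/2) : |(1 - u) ^ p - 1| ≤ 2 * u := by
  have hbase : (0:ℝ) < 1 - u := by linarith
  have hb1 : 1 - u ≤ 1 := by linarith
  rcases le_or_gt 0 p with hp | hp
  · have hup : (1 - u) ^ p ≤ 1 := Real.rpow_le_one hbase.le hb1 hp
    have hlow : (1 - u) ^ (2:ℝ) ≤ (1 - u) ^ p :=
      Real.rpow_le_rpow_of_exponent_ge hbase hb1 hp2
    have h2 : (1 - u) ^ (2:ℝ) = (1-u)^(2:ℕ) := by
      rw [← Real.rpow_natCast (1-u) 2]; norm_num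
    rw [h2] at hlow
    rw [abs_le]; constructor <;> nlinarith
  · have hlow : 1 ≤ (1 - u) ^ p :=
      Real.one_le_rpow_of_pos_of_le_one_of_nonpos hbase hb1 hp.le
    have hup : (1 - u) ^ p ≤ (1 - u) ^ (-(1/2):ℝ) :=
      Real.rpow_le_rpow_of_exponent_ge hbase hb1 hp1
    set A := (1 - u) ^ (-(1/2):ℝ) with hA
    have hApos : 0 < A := Real.rpow_pos_of_pos hbase _
    have hAA : A * A * (1 - u) = 1 := by
      rw [hA, ← Real.rpow_add hbase]
      norm_num
      rw [Real.rpow_neg_one]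
      field_simp
    have hA2 : A ≤ 1 + 2 * u := by
      by_contra hcon
      push_neg at hcon
      have h3 : (1+2*u)*(1+2*u) < A*A := by nlinarith
      have h4 : (1+2*u)*(1+2*u)*(1-u) < A*A*(1-u) :=
        mul_lt_mul_of_pos_right h3 hbase
      rw [hAA] at h4
      nlinarith [mul_nonneg hu (mul_nonneg hu hu)]
    rw [abs_le]; constructor <;> nlinarith

noncomputable def psiF (H : ℝ) (r : ℝ) : ℝ := (r^2 - 1) ^ (H - 1/2) - r ^ (2*H - 1)
noncomputable def jF (H : ℝ) (r : ℝ) : ℝ := (r^2 - 1) ^ (H - 1/2) / r^2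
noncomputable def phiF (H : ℝ) (r : ℝ) : ℝ := (r^2 - 1) ^ (H + 1/2) / r - r ^ (2*H)

lemma sq_rpow_eq {r q : ℝ} (hr : 0 < r) : ((r^2 : ℝ)) ^ q = r ^ (2*q) := by
  rw [← Real.rpow_natCast r 2, ← Real.rpow_mul hr.le]
  norm_num

lemma factor_eq {H r : ℝ} (hr : 1 < r) :
    (r^2 - 1) ^ (H - 1/2) = r ^ (2*H - 1) * (1 - (r^2)⁻¹) ^ (H - 1/2) := by
  have hr0 : (0:ℝ) < r := by linarith
  have hr2 : (0:ℝ) < r^2 := by positivity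
  have h1 : r^2 - 1 = r^2 * (1 - (r^2)⁻¹) := by field_simp
  have h2 : (0:ℝ) ≤ 1 - (r^2)⁻¹ := by
    have : (r^2)⁻¹ ≤ 1 := by
      rw [inv_le_one_iff₀]; right; nlinarith
    linarith
  rw [h1, Real.mul_rpow (by positivity) h2, sq_rpow_eq hr0]
  ring_nf

lemma psiF_eq {H r : ℝ} (hr : 1 < r) :
    psiF H r = r ^ (2*H - 1) * ((1 - (r^2)⁻¹) ^ (H - 1/2) - 1) := by
  rw [psiF, factor_eq hr]; ring

lemma continuousOn_psiF (H : ℝ) : ContinuousOn (psiF H) (Ioi 1) := by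
  apply ContinuousOn.sub
  · apply ContinuousOn.rpow_const (by fun_prop)
    intro r hr
    have : (1:ℝ) < r := hr
    exact Or.inl (by nlinarith)
  · apply ContinuousOn.rpow_const (by fun_prop)
    intro r hr
    have : (1:ℝ) < r := hr
    exact Or.inl (by positivity)

lemma continuousOn_jF (H : ℝ) : ContinuousOn (jF H) (Ioi 1) := by
  apply ContinuousOn.div
  · apply ContinuousOn.rpow_const (by fun_prop)
    intro r hr
    have : (1:ℝ) < r := hr
    exact Or.inl (by nlinarith)
  · fun_prop
  · intro r hr
    have : (1:ℝ) < r := hr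
    positivity

lemma psiF_tail {H r : ℝ} (h0 : 0 < H) (h1 : H < 1) (hr : 2 < r) :
    |psiF H r| ≤ 2 * r ^ (2*H - 3) := by
  have hr0 : (0:ℝ) < r := by linarith
  have hu0 : (0:ℝ) ≤ (r^2)⁻¹ := by positivity
  have hu2 : (r^2)⁻¹ ≤ 1/2 := by
    rw [inv_le_comm₀ (by positivity) (by norm_num)]
    nlinarith
  have hb := aux_abs_one_sub_rpow (p := H - 1/2) (by linarith) (by linarith) hu0 hu2
  rw [psiF_eq (by linarith), abs_mul, abs_of_nonneg (Real.rpow_nonneg hr0.le _)]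
  calc r ^ (2*H - 1) * |(1 - (r^2)⁻¹) ^ (H - 1/2) - 1|
      ≤ r ^ (2*H - 1) * (2 * (r^2)⁻¹) := by
        exact mul_le_mul_of_nonneg_left hb (Real.rpow_nonneg hr0.le _)
    _ = 2 * r ^ (2*H - 3) := by
        have h : r ^ (2*H-1) * r ^ (-2 : ℝ) = r ^ (2*H-3) := by
          rw [← Real.rpow_add hr0]; ring_nf
        have h2 : ((r^2 : ℝ))⁻¹ = r ^ (-2 : ℝ) := by
          rw [← Real.rpow_natCast r 2, ← Real.rpow_neg hr0.le]; norm_num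
        rw [h2, ← h]; ring

lemma jF_nonneg (H : ℝ) {r : ℝ} (hr : 1 < r) : 0 ≤ jF H r := by
  have h : (0:ℝ) ≤ r^2 - 1 := by nlinarith
  have : (0:ℝ) < r ^ 2 := by positivity
  exact div_nonneg (Real.rpow_nonneg h _) this.le

lemma jF_tail {H r : ℝ} (h0 : 0 < H) (h1 : H < 1) (hr : 2 < r) :
    |jF H r| ≤ 2 * r ^ (2*H - 3) := by
  have hr0 : (0:ℝ) < r := by linarith
  have hu0 : (0:ℝ) ≤ (r^2)⁻¹ := by positivity
  have hu2 : (r^2)⁻¹ ≤ 1/2 := by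
    rw [inv_le_comm₀ (by positivity) (by norm_num)]
    nlinarith
  have hb := aux_abs_one_sub_rpow (p := H - 1/2) (by linarith) (by linarith) hu0 hu2
  have hup : (1 - (r^2)⁻¹) ^ (H - 1/2) ≤ 2 := by
    rcases abs_le.1 hb with ⟨_, h⟩
    linarith
  rw [abs_of_nonneg (jF_nonneg H (by linarith))]
  rw [jF, factor_eq (by linarith)]
  have key : r ^ (2*H - 1) * (1 - (r^2)⁻¹) ^ (H - 1/2) / r^2
      ≤ r ^ (2*H - 1) * 2 / r^2 := by
    apply div_le_div_of_nonneg_right ?_ (by positivity) |>.trans_eq rfl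
    exact mul_le_mul_of_nonneg_left hup (Real.rpow_nonneg hr0.le _)
  refine key.trans_eq ?_
  have h : r ^ (2*H-1) * r ^ (-2 : ℝ) = r ^ (2*H-3) := by
    rw [← Real.rpow_add hr0]; ring_nf
  have h2 : ((r^2 : ℝ))⁻¹ = r ^ (-2 : ℝ) := by
    rw [← Real.rpow_natCast r 2, ← Real.rpow_neg hr0.le]; norm_num
  rw [div_eq_mul_inv, h2, ← h]; ring

lemma rpow_base_ge_one_le {r p M : ℝ} (h1 : 1 ≤ r) (h2 : r ≤ M) (hp : p ≤ 1) :
    r ^ p ≤ M := by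
  calc r ^ p ≤ r ^ (1:ℝ) := Real.rpow_le_rpow_of_exponent_le h1 hp
    _ = r := Real.rpow_one r
    _ ≤ M := h2

lemma psiF_compact {H r : ℝ} (h0 : 0 < H) (h1 : H < 1) (hr : r ∈ Ioc (1:ℝ) 2) :
    |psiF H r| ≤ 3 * (r - 1) ^ (H - 1/2) + 3 := by
  obtain ⟨hr1, hr2⟩ := hr
  have hfac : (r^2 - 1 : ℝ) = (r - 1) * (r + 1) := by ring
  have h3 : (r + 1) ^ (H - 1/2) ≤ 3 := by
    refine (aux_rpow_le_max (l := 2) (u := 3) (by norm_num) (by linarith) (by linarith)).trans ?_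
    have a1 : (2:ℝ) ^ (H - 1/2) ≤ 3 := rpow_base_ge_one_le one_le_two (by norm_num) (by linarith)
    have a2 : (3:ℝ) ^ (H - 1/2) ≤ 3 := rpow_base_ge_one_le (by norm_num) (by norm_num) (by linarith)
    exact max_le a1 a2
  have hmul : (r^2 - 1) ^ (H - 1/2) ≤ 3 * (r - 1) ^ (H - 1/2) := by
    rw [hfac, Real.mul_rpow (by linarith) (by linarith), mul_comm]
    exact mul_le_mul_of_nonneg_right h3 (Real.rpow_nonneg (by linarith) _)
  have hpow : r ^ (2*H - 1) ≤ 3 := rpow_base_ge_one_le hr1.le (by linarith) (by linarith)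
  have hnn1 : (0:ℝ) ≤ (r^2 - 1) ^ (H - 1/2) := Real.rpow_nonneg (by nlinarith) _
  have hnn2 : (0:ℝ) ≤ r ^ (2*H - 1) := Real.rpow_nonneg (by linarith) _
  rw [psiF]
  calc |(r^2 - 1) ^ (H - 1/2) - r ^ (2*H - 1)|
      ≤ (r^2 - 1) ^ (H - 1/2) + r ^ (2*H - 1) := by
        rw [abs_sub_comm, abs_le]; constructor <;> nlinarith
    _ ≤ 3 * (r - 1) ^ (H - 1/2) + 3 := by linarith

lemma jF_compact {H r : ℝ} (h0 : 0 < H) (h1 : H < 1) (hr : r ∈ Ioc (1:ℝ) 2) :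
    |jF H r| ≤ 3 * (r - 1) ^ (H - 1/2) + 3 := by
  obtain ⟨hr1, hr2⟩ := hr
  have hfac : (r^2 - 1 : ℝ) = (r - 1) * (r + 1) := by ring
  have h3 : (r + 1) ^ (H - 1/2) ≤ 3 := by
    refine (aux_rpow_le_max (l := 2) (u := 3) (by norm_num) (by linarith) (by linarith)).trans ?_
    have a1 : (2:ℝ) ^ (H - 1/2) ≤ 3 := rpow_base_ge_one_le one_le_two (by norm_num) (by linarith)
    have a2 : (3:ℝ) ^ (H - 1/2) ≤ 3 := rpow_base_ge_one_le (by norm_num) (by norm_num) (by linarith)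
    exact max_le a1 a2
  have hmul : (r^2 - 1) ^ (H - 1/2) ≤ 3 * (r - 1) ^ (H - 1/2) := by
    rw [hfac, Real.mul_rpow (by linarith) (by linarith), mul_comm]
    exact mul_le_mul_of_nonneg_right h3 (Real.rpow_nonneg (by linarith) _)
  rw [abs_of_nonneg (jF_nonneg H hr1), jF]
  have h4 : (r^2 - 1) ^ (H - 1/2) / r^2 ≤ (r^2 - 1) ^ (H - 1/2) := by
    apply div_le_self (Real.rpow_nonneg (by nlinarith) _)
    nlinarith
  have h5 : (0:ℝ) ≤ (r-1) ^ (H - 1/2) := Real.rpow_nonneg (by linarith) _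
  linarith

lemma integrableOn_shift_rpow {H : ℝ} (h0 : 0 < H) :
    IntegrableOn (fun r : ℝ => (r - 1) ^ (H - 1/2)) (Ioc 1 2) := by
  have h := intervalIntegral.intervalIntegrable_rpow' (a := 0) (b := 1)
    (show (-1:ℝ) < H - 1/2 by linarith)
  have h2 := h.comp_sub_right 1
  norm_num at h2
  exact (intervalIntegrable_iff_integrableOn_Ioc_of_le (by norm_num)).1 h2

lemma integrableOn_bound {H : ℝ} (h0 : 0 < H) :
    IntegrableOn (fun r : ℝ => 3 * (r - 1) ^ (H - 1/2) + 3) (Ioc 1 2) := by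
  refine Integrable.add ?_ ?_
  · exact (integrableOn_shift_rpow h0).const_mul 3
  · exact integrableOn_const measure_Ioc_lt_top.ne

lemma integrableOn_aux {H : ℝ} (h0 : 0 < H) (h1 : H < 1) {f : ℝ → ℝ}
    (hcont : ContinuousOn f (Ioi 1))
    (hb1 : ∀ r ∈ Ioc (1:ℝ) 2, |f r| ≤ 3 * (r - 1) ^ (H - 1/2) + 3)
    (hb2 : ∀ r ∈ Ioi (2:ℝ), |f r| ≤ 2 * r ^ (2*H - 3)) :
    IntegrableOn f (Ioi 1) := by
  have hIoi : Ioc (1:ℝ) 2 ∪ Ioi 2 = Ioi 1 := Ioc_union_Ioi_eq_Ioi (by norm_num)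
  rw [← hIoi]
  refine IntegrableOn.union ?_ ?_
  · refine Integrable.mono' (integrableOn_bound h0)
      ((hcont.mono Ioc_subset_Ioi_self).aestronglyMeasurable measurableSet_Ioc) ?_
    rw [ae_restrict_iff' measurableSet_Ioc]
    exact ae_of_all _ fun r hr => by simpa using hb1 r hr
  · refine Integrable.mono' ((integrableOn_Ioi_rpow_of_lt (a := 2*H-3) (c := 2) (by linarith) (by norm_num)).const_mul 2)
      ((hcont.mono (Ioi_subset_Ioi (by norm_num))).aestronglyMeasurable measurableSet_Ioi) ?_
    rw [ae_restrict_iff' measurableSet_Ioi]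
    exact ae_of_all _ fun r hr => by simpa using hb2 r hr

lemma integrableOn_psiF {H : ℝ} (h0 : 0 < H) (h1 : H < 1) :
    IntegrableOn (psiF H) (Ioi 1) :=
  integrableOn_aux h0 h1 (continuousOn_psiF H)
    (fun r hr => psiF_compact h0 h1 hr) (fun r hr => psiF_tail h0 h1 hr)

lemma integrableOn_jF {H : ℝ} (h0 : 0 < H) (h1 : H < 1) :
    IntegrableOn (jF H) (Ioi 1) :=
  integrableOn_aux h0 h1 (continuousOn_jF H)
    (fun r hr => jF_compact h0 h1 hr) (fun r hr => jF_tail h0 h1 hr)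

lemma factor_eq' {q r : ℝ} (hr : 1 < r) :
    (r^2 - 1) ^ q = r ^ (2*q) * (1 - (r^2)⁻¹) ^ q := by
  have hr0 : (0:ℝ) < r := by linarith
  have h1 : r^2 - 1 = r^2 * (1 - (r^2)⁻¹) := by field_simp
  have h2 : (0:ℝ) ≤ 1 - (r^2)⁻¹ := by
    have : (r^2)⁻¹ ≤ 1 := by rw [inv_le_one_iff₀]; right; nlinarith
    linarith
  rw [h1, Real.mul_rpow (by positivity) h2, sq_rpow_eq hr0]

lemma phiF_eq {H r : ℝ} (hr : 1 < r) :
    phiF H r = r ^ (2*H) * ((1 - (r^2)⁻¹) ^ (H + 1/2) - 1) := by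
  have hr0 : (0:ℝ) < r := by linarith
  rw [phiF, factor_eq' (q := H + 1/2) hr]
  rw [show 2*(H + 1/2) = 2*H + 1 by ring, Real.rpow_add_one hr0.ne']
  field_simp

lemma hasDerivAt_phiF {H r : ℝ} (hr : 1 < r) :
    HasDerivAt (phiF H) (2*H * psiF H r + jF H r) r := by
  have hr0 : (0:ℝ) < r := by linarith
  have hq : (0:ℝ) < r^2 - 1 := by nlinarith
  have d1 : HasDerivAt (fun s : ℝ => s^2 - 1) (2*r) r := by
    simpa using (hasDerivAt_pow 2 r).sub_const 1
  have d2 : HasDerivAt (fun s : ℝ => (s^2 - 1) ^ (H + 1/2))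
      (2*r * (H + 1/2) * (r^2 - 1) ^ (H + 1/2 - 1)) r :=
    d1.rpow_const (Or.inl hq.ne')
  have d3 : HasDerivAt (fun s : ℝ => (s^2 - 1) ^ (H + 1/2) / s)
      ((2*r * (H + 1/2) * (r^2 - 1) ^ (H + 1/2 - 1) * r - (r^2 - 1) ^ (H + 1/2) * 1) / r^2)
      r := d2.div (hasDerivAt_id r) hr0.ne'
  have d4 : HasDerivAt (fun s : ℝ => s ^ (2*H)) (2*H * r ^ (2*H - 1)) r := by
    simpa using Real.hasDerivAt_rpow_const (x := r) (p := 2*H) (Or.inl hr0.ne')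
  have d5 := d3.sub d4
  refine d5.congr_deriv ?_
  rw [show H + 1/2 - 1 = H - 1/2 by ring,
    show H + 1/2 = (H - 1/2) + 1 by ring, Real.rpow_add_one hq.ne']
  rw [psiF, jF]
  field_simp
  ring

lemma phiF_one (H : ℝ) (h0 : 0 < H) : phiF H 1 = -1 := by
  have h : ((1:ℝ)^2 - 1) = 0 := by norm_num
  rw [phiF, h, Real.zero_rpow (by positivity), Real.one_rpow]
  norm_num

lemma continuousWithinAt_phiF {H : ℝ} (h0 : 0 < H) :
    ContinuousWithinAt (phiF H) (Ici 1) 1 := by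
  have c1 : ContinuousAt (fun r : ℝ => (r^2 - 1)) 1 := by fun_prop
  have c3 : ContinuousAt (fun r : ℝ => (r^2 - 1) ^ (H + 1/2)) 1 := by
    refine ContinuousAt.comp (g := fun x : ℝ => x ^ (H + 1/2))
      (f := fun r : ℝ => r^2 - 1) (x := (1:ℝ)) ?_ c1
    have c2 : ContinuousAt (fun x : ℝ => x ^ (H + 1/2)) 0 :=
      Real.continuousAt_rpow_const 0 _ (Or.inr (by positivity))
    convert c2 using 2
    norm_num
  exact ((c3.div (by fun_prop) (by norm_num)).sub
    (Real.continuousAt_rpow_const 1 (2*H) (Or.inl one_ne_zero))).continuousWithinAt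

lemma tendsto_phiF {H : ℝ} (h0 : 0 < H) (h1 : H < 1) :
    Tendsto (phiF H) atTop (𝓝 0) := by
  apply squeeze_zero_norm' (a := fun r : ℝ => 2 * r ^ (-(2 - 2*H)))
  · filter_upwards [eventually_ge_atTop (2:ℝ)] with r hr
    have hr1 : (1:ℝ) < r := by linarith
    have hr0 : (0:ℝ) < r := by linarith
    have hu0 : (0:ℝ) ≤ (r^2)⁻¹ := by positivity
    have hu2 : (r^2)⁻¹ ≤ 1/2 := by
      rw [inv_le_comm₀ (by positivity) (by norm_num)]
      nlinarith
    have hb := aux_abs_one_sub_rpow (p := H + 1/2) (by linarith) (by linarith) hu0 hu2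
    rw [Real.norm_eq_abs, phiF_eq hr1, abs_mul, abs_of_nonneg (Real.rpow_nonneg hr0.le _)]
    calc r ^ (2*H) * |(1 - (r^2)⁻¹) ^ (H + 1/2) - 1|
        ≤ r ^ (2*H) * (2 * (r^2)⁻¹) :=
          mul_le_mul_of_nonneg_left hb (Real.rpow_nonneg hr0.le _)
      _ = 2 * r ^ (-(2 - 2*H)) := by
          have h : r ^ (2*H) * r ^ (-2 : ℝ) = r ^ (-(2-2*H)) := by
            rw [← Real.rpow_add hr0]; ring_nf
          have h2 : ((r^2 : ℝ))⁻¹ = r ^ (-2 : ℝ) := by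
            rw [← Real.rpow_natCast r 2, ← Real.rpow_neg hr0.le]; norm_num
          rw [h2, ← h]; ring
  · have := (tendsto_rpow_neg_atTop (y := 2 - 2*H) (by linarith)).const_mul (2:ℝ)
    simpa using this

lemma ftc_identity {H : ℝ} (h0 : 0 < H) (h1 : H < 1) :
    2*H * (∫ r in Ioi (1:ℝ), psiF H r) + (∫ r in Ioi (1:ℝ), jF H r) = 1 := by
  have hint : IntegrableOn (fun r => 2*H * psiF H r + jF H r) (Ioi (1:ℝ)) :=
    ((integrableOn_psiF h0 h1).const_mul (2*H)).add (integrableOn_jF h0 h1)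
  have key := integral_Ioi_of_hasDerivAt_of_tendsto (f := phiF H)
    (f' := fun r => 2*H * psiF H r + jF H r) (a := 1) (m := 0)
    (continuousWithinAt_phiF h0) (fun r hr => hasDerivAt_phiF hr) hint (tendsto_phiF h0 h1)
  rw [phiF_one H h0] at key
  rw [← integral_const_mul, ← integral_add ((integrableOn_psiF h0 h1).const_mul (2*H))
    (integrableOn_jF h0 h1)]
  rw [key]
  norm_num

lemma real_beta {H : ℝ} (h0 : 0 < H) (h1 : H < 1) :
    Real.Gamma (1-H) * Real.Gamma (1/2+H)
      = Real.Gamma (3/2) * ∫ v in (0:ℝ)..1, v ^ (-H) * (1-v) ^ (H - 1/2) := by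
  have hu : 0 < ((1-H : ℝ) : ℂ).re := by rw [Complex.ofReal_re]; linarith
  have hv : 0 < ((1/2+H : ℝ) : ℂ).re := by rw [Complex.ofReal_re]; linarith
  have key := Complex.Gamma_mul_Gamma_eq_betaIntegral hu hv
  have hsum : ((1-H : ℝ) : ℂ) + ((1/2+H : ℝ) : ℂ) = ((3/2 : ℝ) : ℂ) := by push_cast; ring
  rw [hsum] at key
  have hbeta : Complex.betaIntegral ((1-H : ℝ) : ℂ) ((1/2+H : ℝ) : ℂ)
      = ((∫ v in (0:ℝ)..1, v ^ (-H) * (1-v) ^ (H - 1/2) : ℝ) : ℂ) := by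
    rw [Complex.betaIntegral, ← intervalIntegral.integral_ofReal]
    apply intervalIntegral.integral_congr
    intro x hx
    rw [uIcc_of_le (by norm_num : (0:ℝ) ≤ 1)] at hx
    obtain ⟨hx0, hx1⟩ := hx
    show (x:ℂ) ^ (((1-H:ℝ):ℂ) - 1) * (1 - (x:ℂ)) ^ (((1/2+H:ℝ):ℂ) - 1)
      = ((x ^ (-H) * (1 - x) ^ (H - 1/2) : ℝ) : ℂ)
    have e1 : ((1-H : ℝ) : ℂ) - 1 = ((-H : ℝ) : ℂ) := by push_cast; ring
    have e2 : ((1/2+H : ℝ) : ℂ) - 1 = ((H - 1/2 : ℝ) : ℂ) := by push_cast; ring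
    have e3 : (1 : ℂ) - (x : ℂ) = ((1 - x : ℝ) : ℂ) := by push_cast; ring
    rw [e1, e2, e3, ← Complex.ofReal_cpow hx0, ← Complex.ofReal_cpow (by linarith),
      ← Complex.ofReal_mul]
  rw [hbeta, Complex.Gamma_ofReal, Complex.Gamma_ofReal, Complex.Gamma_ofReal,
    ← Complex.ofReal_mul, ← Complex.ofReal_mul] at key
  exact_mod_cast key

lemma gamma_three_halves : Real.Gamma (3/2) = Real.sqrt Real.pi / 2 := by
  rw [show (3/2 : ℝ) = 1/2 + 1 by norm_num, Real.Gamma_add_one (by norm_num),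
    Real.Gamma_one_half_eq]
  ring

lemma rpow_neg_two_eq {x : ℝ} (hx : 0 < x) : x ^ (-2 : ℝ) = (x^2)⁻¹ := by
  rw [← Real.rpow_natCast x 2, ← Real.rpow_neg hx.le]; norm_num

lemma Jval {H : ℝ} (h0 : 0 < H) (h1 : H < 1) :
    ∫ r in Ioi (1:ℝ), jF H r
      = Real.Gamma (1-H) * Real.Gamma (1/2+H) / Real.sqrt Real.pi := by
  set g : ℝ → ℝ := indicator (Ioo (0:ℝ) 1) (fun v => v ^ (-H) * (1-v) ^ (H - 1/2)) with hg
  have sub := MeasureTheory.integral_comp_rpow_Ioi g (p := (-2:ℝ)) (by norm_num)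
  have hL : ∫ x in Ioi (0:ℝ), (|(-2:ℝ)| * x ^ ((-2:ℝ) - 1)) • g (x ^ (-2:ℝ))
      = 2 * ∫ x in Ioi (1:ℝ), jF H x := by
    have hcong : ∀ x ∈ Ioi (0:ℝ), (|(-2:ℝ)| * x ^ ((-2:ℝ) - 1)) • g (x ^ (-2:ℝ))
        = indicator (Ioi (1:ℝ)) (fun x => 2 * jF H x) x := by
      intro x hx
      have hx0 : (0:ℝ) < x := hx
      have hxm : x ^ (-2:ℝ) = (x^2)⁻¹ := rpow_neg_two_eq hx0
      rcases le_or_gt x 1 with hle | hgt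
      · have hmem : x ^ (-2:ℝ) ∉ Ioo (0:ℝ) 1 := by
          rw [hxm]
          intro ⟨_, hlt⟩
          rw [inv_lt_one_iff₀] at hlt
          rcases hlt with h | h
          · nlinarith
          · nlinarith
        rw [hg, indicator_of_notMem hmem, indicator_of_notMem (by simpa using hle), smul_zero]
      · have hmem : x ^ (-2:ℝ) ∈ Ioo (0:ℝ) 1 := by
          rw [hxm]
          constructor
          · positivity
          · rw [inv_lt_one_iff₀]; right; nlinarith
        have e1 : (x ^ (-2:ℝ)) ^ (-H) = x ^ (2*H) := by
          rw [← Real.rpow_mul hx0.le]; ring_nf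
        have e2 : |(-2:ℝ)| = 2 := by norm_num
        have e3 : x ^ ((-2:ℝ) - 1) = x ^ (-3:ℝ) := by norm_num
        have e4 : x ^ (-3:ℝ) * x ^ (2*H) = x ^ (2*H - 3) := by
          rw [← Real.rpow_add hx0]; ring_nf
        have e5 : x ^ (2*(H - 1/2)) / x^2 = x ^ (2*H - 3) := by
          rw [← Real.rpow_natCast x 2, ← Real.rpow_sub hx0]
          push_cast; ring_nf
        rw [hg, indicator_of_mem hmem, indicator_of_mem (by simpa using hgt), smul_eq_mul]
        rw [jF, factor_eq' (q := H - 1/2) hgt, e1, hxm, e2, e3]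
        calc 2 * x ^ (-3:ℝ) * (x ^ (2*H) * (1 - (x^2)⁻¹) ^ (H - 1/2))
            = (x ^ (-3:ℝ) * x ^ (2*H)) * (2 * (1 - (x^2)⁻¹) ^ (H - 1/2)) := by ring
          _ = x ^ (2*H - 3) * (2 * (1 - (x^2)⁻¹) ^ (H - 1/2)) := by rw [e4]
          _ = 2 * (x ^ (2*(H - 1/2)) * (1 - (x^2)⁻¹) ^ (H - 1/2) / x^2) := by
              rw [← e5]; ring
    rw [setIntegral_congr_fun measurableSet_Ioi hcong,
      setIntegral_indicator measurableSet_Ioi]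
    rw [show Ioi (0:ℝ) ∩ Ioi 1 = Ioi 1 by
      rw [inter_eq_right]; exact fun y hy => mem_Ioi.2 (lt_trans zero_lt_one hy)]
    exact integral_const_mul 2 _
  have hR : ∫ x in Ioi (0:ℝ), g x = ∫ v in (0:ℝ)..1, v ^ (-H) * (1-v) ^ (H - 1/2) := by
    rw [hg, setIntegral_indicator measurableSet_Ioo]
    rw [show Ioi (0:ℝ) ∩ Ioo 0 1 = Ioo 0 1 by
      rw [inter_eq_right]; exact fun y hy => hy.1]
    rw [intervalIntegral.integral_of_le (by norm_num : (0:ℝ) ≤ 1),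
      integral_Ioc_eq_integral_Ioo]
  rw [hL, hR] at sub
  have hbeta := real_beta h0 h1
  rw [← sub, gamma_three_halves] at hbeta
  have hpi : Real.sqrt Real.pi ≠ 0 := by
    have := Real.pi_pos
    positivity
  field_simp at hbeta ⊢
  linarith

lemma main_identity {H : ℝ} (h0 : 0 < H) (h1 : H < 1) {t : ℝ} (ht : 0 < t) :
    2 * H * Real.exp (-(H * t))
        * (∫ u in (0:ℝ)..1, (u * (u + Real.exp t - 1)) ^ (H - 1/2))
      = Real.cosh (t/2) ^ (2*H)
        + Real.exp (-(H*t)) * ((Real.exp t - 1)/2) ^ (2*H)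
          * (2*H * (∫ r in (1:ℝ)..((1 + (Real.exp t - 1)/2) / ((Real.exp t - 1)/2)),
              psiF H r) - 1) := by
  set a : ℝ := (Real.exp t - 1)/2 with ha_def
  have hexp : 1 < Real.exp t := by
    rw [← Real.exp_zero]
    exact Real.exp_lt_exp.2 ht
  have ha : 0 < a := by rw [ha_def]; linarith
  have hT1 : (1:ℝ) ≤ (1 + a)/a := by
    rw [le_div_iff₀ ha]; linarith
  -- Step 1 : shift the integral
  have step1 : (∫ u in (0:ℝ)..1, (u * (u + Real.exp t - 1)) ^ (H - 1/2))
      = ∫ w in a..(1+a), (w^2 - a^2) ^ (H - 1/2) := by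
    have hcong : ∀ u ∈ uIcc (0:ℝ) 1,
        (u * (u + Real.exp t - 1)) ^ (H - 1/2) = ((u + a)^2 - a^2) ^ (H - 1/2) := by
      intro u _
      congr 1
      rw [ha_def]; ring
    rw [intervalIntegral.integral_congr hcong]
    have := intervalIntegral.integral_comp_add_right (a := (0:ℝ)) (b := 1)
      (fun w => (w^2 - a^2) ^ (H - 1/2)) a
    simpa using this
  -- Integrability facts
  have hfc : ContinuousOn (fun w : ℝ => (w^2 - a^2) ^ (H - 1/2)) (Ioc a (1+a)) := by
    apply ContinuousOn.rpow_const (by fun_prop)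
    intro w hw
    have h' : a < w := hw.1
    exact Or.inl (by nlinarith)
  have hfi : IntervalIntegrable (fun w : ℝ => (w^2 - a^2) ^ (H - 1/2)) volume a (1+a) := by
    rw [intervalIntegrable_iff_integrableOn_Ioc_of_le (by linarith)]
    set C := max ((2*a) ^ (H - 1/2)) ((1+2*a) ^ (H - 1/2)) with hC
    have hbase : IntegrableOn (fun w : ℝ => (w - a) ^ (H - 1/2) * C) (Ioc a (1+a)) := by
      have h := intervalIntegral.intervalIntegrable_rpow' (a := 0) (b := 1)
        (show (-1:ℝ) < H - 1/2 by linarith)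
      have h2 := (h.comp_sub_right a).mul_const C
      rw [intervalIntegrable_iff_integrableOn_Ioc_of_le (by linarith)] at h2
      simpa using h2
    refine Integrable.mono' hbase (hfc.aestronglyMeasurable measurableSet_Ioc) ?_
    rw [ae_restrict_iff' measurableSet_Ioc]
    refine ae_of_all _ fun w hw => ?_
    obtain ⟨hw1, hw2⟩ := hw
    have hnn : (0:ℝ) ≤ w^2 - a^2 := by nlinarith
    rw [Real.norm_eq_abs, abs_of_nonneg (Real.rpow_nonneg hnn _)]
    have hfac : w^2 - a^2 = (w - a) * (w + a) := by ring
    rw [hfac, Real.mul_rpow (by linarith) (by linarith)]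
    refine mul_le_mul_of_nonneg_left ?_ (Real.rpow_nonneg (by linarith) _)
    exact aux_rpow_le_max (by linarith) (by linarith) (by linarith)
  have hpow_ii : IntervalIntegrable (fun w : ℝ => w ^ (2*H - 1)) volume a (1+a) := by
    apply ContinuousOn.intervalIntegrable
    apply ContinuousOn.rpow_const (by fun_prop)
    intro w hw
    rw [uIcc_of_le (by linarith : a ≤ 1+a)] at hw
    exact Or.inl (by nlinarith [hw.1])
  -- Step 3 : split
  have step3 : ∫ w in a..(1+a), (w^2 - a^2) ^ (H - 1/2)
      = (∫ w in a..(1+a), w ^ (2*H - 1))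
        + ∫ w in a..(1+a), ((w^2 - a^2) ^ (H - 1/2) - w ^ (2*H - 1)) := by
    rw [← intervalIntegral.integral_add hpow_ii (hfi.sub hpow_ii)]
    apply intervalIntegral.integral_congr
    intro w _
    ring
  -- Step 4 : power integral
  have step4 : (∫ w in a..(1+a), w ^ (2*H - 1)) = ((1+a) ^ (2*H) - a ^ (2*H)) / (2*H) := by
    rw [integral_rpow (Or.inl (by linarith : (-1:ℝ) < 2*H - 1))]
    norm_num
  -- Step 5 : scaling
  have step5 : (∫ w in a..(1+a), ((w^2 - a^2) ^ (H - 1/2) - w ^ (2*H - 1)))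
      = a ^ (2*H) * ∫ r in (1:ℝ)..((1 + a)/a), psiF H r := by
    have hc := intervalIntegral.integral_comp_mul_left (a := (1:ℝ)) (b := (1+a)/a)
      (c := a) (f := fun w => (w^2 - a^2) ^ (H - 1/2) - w ^ (2*H - 1)) ha.ne'
    have hb : a * ((1+a)/a) = 1 + a := by field_simp
    rw [hb, mul_one] at hc
    have hcong : ∀ x ∈ uIcc (1:ℝ) ((1+a)/a),
        ((a*x)^2 - a^2) ^ (H - 1/2) - (a*x) ^ (2*H - 1) = a ^ (2*H - 1) * psiF H x := by
      intro x hx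
      rw [uIcc_of_le hT1] at hx
      have hx1 : 1 ≤ x := hx.1
      have hx0 : 0 ≤ x := by linarith
      have hfac : (a*x)^2 - a^2 = a^2 * (x^2 - 1) := by ring
      rw [hfac, Real.mul_rpow (by positivity) (by nlinarith), sq_rpow_eq ha,
        Real.mul_rpow ha.le hx0, psiF]
      rw [show 2*(H - 1/2) = 2*H - 1 by ring]
      ring
    rw [intervalIntegral.integral_congr hcong, intervalIntegral.integral_const_mul] at hc
    simp only [smul_eq_mul] at hc
    have key : a * (a ^ (2*H - 1) * ∫ r in (1:ℝ)..((1 + a)/a), psiF H r)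
        = ∫ w in a..(1+a), ((w^2 - a^2) ^ (H - 1/2) - w ^ (2*H - 1)) := by
      rw [hc, ← mul_assoc, mul_inv_cancel₀ ha.ne', one_mul]
    rw [← key, show (2*H) = (2*H - 1) + 1 by ring, Real.rpow_add_one ha.ne']
    ring
  -- cosh identity
  have hch : Real.exp (-(H*t)) * (1+a) ^ (2*H) = Real.cosh (t/2) ^ (2*H) := by
    have h1' : Real.exp (-(H*t)) = (Real.exp (-(t/2))) ^ (2*H) := by
      rw [← Real.exp_mul]; ring_nf
    rw [h1', ← Real.mul_rpow (Real.exp_pos _).le (by positivity)]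
    congr 1
    rw [Real.cosh_eq, ha_def]
    have h2' : Real.exp (-(t/2)) * Real.exp t = Real.exp (t/2) := by
      rw [← Real.exp_add]; ring_nf
    linear_combination (1/2) * h2'
  rw [step1, step3, step4, step5]
  set G := ∫ r in (1:ℝ)..((1 + a)/a), psiF H r
  have hHne : (2*H) ≠ 0 := by positivity
  field_simp
  rw [← hch]
  ring

lemma sinh_le_small {u : ℝ} (h0u : 0 ≤ u) (hu : u ≤ 1/2) : Real.sinh u ≤ 2*u := by
  have hpos : (0:ℝ) < 1 - u := by linarith
  have h1 : 1 - u ≤ Real.exp (-u) := by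
    have := Real.add_one_le_exp (-u); linarith
  have h2 : (1 - u) * Real.exp u ≤ 1 := by
    have h3 : (1-u) * Real.exp u ≤ Real.exp (-u) * Real.exp u :=
      mul_le_mul_of_nonneg_right h1 (Real.exp_pos u).le
    rw [← Real.exp_add] at h3
    norm_num at h3
    exact h3
  rw [Real.sinh_eq]
  nlinarith [Real.exp_pos u, Real.exp_pos (-u), mul_le_mul_of_nonneg_left h1 hpos.le]

lemma part1_littleO {H : ℝ} (h0 : 0 < H) (h1 : H < 1) :
    (fun t : ℝ => Real.cosh (t/2) ^ (2*H) - 1)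
      =o[nhdsWithin 0 (Set.Ioi 0)] fun t : ℝ => t ^ (2*H) := by
  rw [isLittleO_iff]
  intro ε hε
  have htd : Tendsto (fun t : ℝ => t ^ (2-2*H)) (𝓝[>](0:ℝ)) (𝓝 0) := by
    have hct := (Real.continuousAt_rpow_const 0 (2-2*H) (Or.inr (by linarith))).tendsto
    rw [Real.zero_rpow (by linarith : (2-2*H) ≠ 0)] at hct
    exact hct.mono_left nhdsWithin_le_nhds
  filter_upwards [Ioo_mem_nhdsGT (zero_lt_one), htd.eventually (gt_mem_nhds hε)]
    with t ht hte
  obtain ⟨ht0, ht1⟩ := ht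
  have hc1 : 1 ≤ Real.cosh (t/2) := Real.one_le_cosh _
  have hup : Real.cosh (t/2) ^ (2*H) ≤ Real.cosh (t/2) ^ (2:ℝ) :=
    Real.rpow_le_rpow_of_exponent_le hc1 (by linarith)
  have hsq : Real.cosh (t/2) ^ (2:ℝ) = Real.cosh (t/2) ^ (2:ℕ) := by
    rw [← Real.rpow_natCast (Real.cosh (t/2)) 2]; norm_num
  have hsinh : Real.sinh (t/2) ≤ t := by
    have := sinh_le_small (u := t/2) (by linarith) (by linarith)
    linarith
  have hsinh0 : 0 ≤ Real.sinh (t/2) := Real.sinh_nonneg_iff.2 (by linarith)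
  have hcoshsq : Real.cosh (t/2) ^ (2:ℕ) = Real.sinh (t/2) ^ 2 + 1 := Real.cosh_sq _
  have hbound : Real.cosh (t/2) ^ (2*H) - 1 ≤ t^2 := by
    have : Real.sinh (t/2)^2 ≤ t^2 := by nlinarith
    rw [hsq, hcoshsq] at hup
    linarith
  have hnn : 0 ≤ Real.cosh (t/2) ^ (2*H) - 1 := by
    have := Real.one_le_rpow hc1 (by linarith : (0:ℝ) ≤ 2*H)
    linarith
  have hts : t^2 ≤ ε * t ^ (2*H) := by
    have e1 : (t:ℝ)^2 = t ^ (2*H) * t ^ (2-2*H) := by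
      rw [← Real.rpow_add ht0, ← Real.rpow_natCast t 2]
      norm_num
    rw [e1]
    calc t ^ (2*H) * t ^ (2-2*H) ≤ t ^ (2*H) * ε := by
          exact mul_le_mul_of_nonneg_left hte.le (Real.rpow_nonneg ht0.le _)
      _ = ε * t ^ (2*H) := by ring
  rw [Real.norm_eq_abs, Real.norm_eq_abs, abs_of_nonneg hnn,
    abs_of_nonneg (Real.rpow_nonneg ht0.le _)]
  linarith

lemma tendsto_q {H : ℝ} (h0 : 0 < H) (h1 : H < 1) :
    Tendsto (fun t : ℝ => Real.exp (-(H*t)) * ((Real.exp t - 1)/t) ^ (2*H)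
        * (2*H * (∫ r in (1:ℝ)..((1 + (Real.exp t - 1)/2) / ((Real.exp t - 1)/2)),
            psiF H r) - 1))
      (𝓝[>](0:ℝ))
      (𝓝 (-(Real.Gamma (1-H) * Real.Gamma (1/2+H) / Real.sqrt Real.pi))) := by
  set c := Real.Gamma (1-H) * Real.Gamma (1/2+H) / Real.sqrt Real.pi with hc
  set K := ∫ r in Ioi (1:ℝ), psiF H r with hK
  have hKc : 2*H*K = 1 - c := by
    have h2 := ftc_identity h0 h1
    rw [Jval h0 h1] at h2
    rw [hK, hc]
    linarith
  have hq1 : Tendsto (fun t : ℝ => Real.exp (-(H*t))) (𝓝[>](0:ℝ)) (𝓝 1) := by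
    have : Continuous fun t : ℝ => Real.exp (-(H*t)) := by fun_prop
    have h := this.tendsto 0
    norm_num at h
    exact h.mono_left nhdsWithin_le_nhds
  have hq2 : Tendsto (fun t : ℝ => ((Real.exp t - 1)/t) ^ (2*H)) (𝓝[>](0:ℝ)) (𝓝 1) := by
    have hd := Real.hasDerivAt_exp 0
    rw [hasDerivAt_iff_tendsto_slope] at hd
    rw [Real.exp_zero] at hd
    have hmono : (𝓝[>](0:ℝ)) ≤ (𝓝[≠](0:ℝ)) :=
      nhdsWithin_mono 0 (fun x hx => ne_of_gt hx)
    have hslope : Tendsto (fun t : ℝ => (Real.exp t - 1)/t) (𝓝[>](0:ℝ)) (𝓝 1) := by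
      refine (hd.mono_left hmono).congr ?_
      intro t
      rw [slope_def_field, Real.exp_zero, sub_zero]
    have := hslope.rpow_const (p := 2*H) (Or.inl one_ne_zero)
    rwa [Real.one_rpow] at this
  have hq3 : Tendsto (fun t : ℝ =>
      ∫ r in (1:ℝ)..((1 + (Real.exp t - 1)/2) / ((Real.exp t - 1)/2)), psiF H r)
      (𝓝[>](0:ℝ)) (𝓝 K) := by
    refine intervalIntegral_tendsto_integral_Ioi 1 (integrableOn_psiF h0 h1) ?_
    have ha' : Tendsto (fun t : ℝ => (Real.exp t - 1)/2) (𝓝[>](0:ℝ)) (𝓝[>](0:ℝ)) := by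
      rw [tendsto_nhdsWithin_iff]
      constructor
      · have : Continuous fun t : ℝ => (Real.exp t - 1)/2 := by fun_prop
        have h := this.tendsto 0
        norm_num at h
        exact h.mono_left nhdsWithin_le_nhds
      · filter_upwards [self_mem_nhdsWithin] with t ht
        have : 1 < Real.exp t := by
          rw [← Real.exp_zero]; exact Real.exp_lt_exp.2 ht
        simp only [mem_Ioi]
        linarith
    have hinv : Tendsto (fun t : ℝ => ((Real.exp t - 1)/2)⁻¹ + 1) (𝓝[>](0:ℝ)) atTop :=
      tendsto_atTop_add_const_right _ 1 (tendsto_inv_nhdsGT_zero.comp ha')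
    refine hinv.congr' ?_
    filter_upwards [self_mem_nhdsWithin] with t ht
    have hexp : 1 < Real.exp t := by
      rw [← Real.exp_zero]; exact Real.exp_lt_exp.2 ht
    have hane : ((Real.exp t - 1)/2) ≠ 0 := by
      have : (0:ℝ) < (Real.exp t - 1)/2 := by linarith
      exact this.ne'
    rw [eq_div_iff hane]
    have hne2 : Real.exp t - 1 ≠ 0 := by
      intro h; rw [sub_eq_zero] at h; rw [← h] at hexp; linarith
    field_simp
  have hfinal := (hq1.mul hq2).mul ((hq3.const_mul (2*H)).sub_const 1)
  rw [hKc] at hfinal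
  norm_num at hfinal
  convert hfinal using 2

theorem stmt_17 (H : ℝ) (hH : H ∈ Set.Ioo (0 : ℝ) 1) :
    (fun t : ℝ =>
        (2 * H * Real.exp (-(H * t))
            * ∫ u in (0:ℝ)..1, (u * (u + Real.exp t - 1)) ^ (H - 1/2))
          - (1 - (Real.Gamma (1 - H) * Real.Gamma (1/2 + H) / Real.sqrt Real.pi)
                * (t / 2) ^ (2 * H)))
      =o[nhdsWithin 0 (Set.Ioi 0)] fun t : ℝ => t ^ (2 * H) := by
  obtain ⟨h0, h1⟩ := hH
  set c := Real.Gamma (1 - H) * Real.Gamma (1/2 + H) / Real.sqrt Real.pi with hc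
  set q : ℝ → ℝ := fun t => Real.exp (-(H*t)) * ((Real.exp t - 1)/t) ^ (2*H)
    * (2*H * (∫ r in (1:ℝ)..((1 + (Real.exp t - 1)/2) / ((Real.exp t - 1)/2)),
        psiF H r) - 1) with hqdef
  have hq : Tendsto (fun t : ℝ => c + q t) (𝓝[>](0:ℝ)) (𝓝 0) := by
    have := tendsto_const_nhds (x := c) (f := 𝓝[>](0:ℝ)) |>.add (tendsto_q h0 h1)
    norm_num at this
    rwa [← hc, add_neg_cancel] at this
  -- part 2 little-o
  have part2 : (fun t : ℝ => (t/2) ^ (2*H) * (c + q t))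
      =o[nhdsWithin 0 (Set.Ioi 0)] fun t : ℝ => t ^ (2*H) := by
    rw [isLittleO_iff]
    intro ε hε
    have h2 := Metric.tendsto_nhds.mp hq ε hε
    filter_upwards [self_mem_nhdsWithin, h2] with t ht hd
    rw [Real.dist_eq, sub_zero] at hd
    have ht0 : (0:ℝ) < t := ht
    have hle : (t/2) ^ (2*H) ≤ t ^ (2*H) :=
      Real.rpow_le_rpow (by linarith) (by linarith) (by linarith)
    rw [Real.norm_eq_abs, Real.norm_eq_abs, abs_mul,
      abs_of_nonneg (Real.rpow_nonneg (by linarith : (0:ℝ) ≤ t/2) _),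
      abs_of_nonneg (Real.rpow_nonneg ht0.le _)]
    calc (t/2) ^ (2*H) * |c + q t| ≤ t ^ (2*H) * ε := by
          exact mul_le_mul hle hd.le (abs_nonneg _) (Real.rpow_nonneg ht0.le _)
      _ = ε * t ^ (2*H) := by ring
  have hsum := (part1_littleO h0 h1).add part2
  refine hsum.congr' ?_ (Filter.EventuallyEq.refl _ _)
  filter_upwards [self_mem_nhdsWithin] with t ht
  have ht0 : (0:ℝ) < t := ht
  have hid := main_identity h0 h1 ht0
  have hsplit : ((Real.exp t - 1)/2) ^ (2*H) = (t/2) ^ (2*H) * ((Real.exp t - 1)/t) ^ (2*H) := by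
    have e1 : (Real.exp t - 1)/2 = (t/2) * ((Real.exp t - 1)/t) := by
      field_simp
    have hexp : 1 < Real.exp t := by
      rw [← Real.exp_zero]; exact Real.exp_lt_exp.2 ht0
    have hnn : (0:ℝ) ≤ (Real.exp t - 1)/t :=
      div_nonneg (by linarith) ht0.le
    rw [e1, Real.mul_rpow (by linarith) hnn]
  show Real.cosh (t/2) ^ (2*H) - 1 + (t/2) ^ (2*H) * (c + q t)
      = 2 * H * Real.exp (-(H * t))
          * (∫ u in (0:ℝ)..1, (u * (u + Real.exp t - 1)) ^ (H - 1/2))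
        - (1 - c * (t/2) ^ (2*H))
  rw [hid, hqdef]
  simp only []
  rw [hsplit]
  ring
end
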